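/- arXiv:1912.13154 — 3 statements merged into one kernel-verified Lean document; each statement's English description precedes it below -/
import Mathlib

section
/- Consider the error dynamics ṡ = −η s + f̃ with η > 0 under the monotonicity assumption (with function α(x, t) and constant D₁ > 0), together with the doubly elastic momentum algorithm v̂̇ = −γ f̃ α + ρ(v̄ − v̂), v̄̇ = ρ(v̂ − v̄), â̇ = β 𝒩(v̂ − â) + k β 𝒩(ā − â), ā̇ = k β 𝒩(â − ā), with 0 < ρ < β(1 − k), 1/3 ≤ k < 1, 𝒩(t) = 1 + μ‖α(x(t), t)‖², γ, β > 0, and μ > 2 γ D₁/(β(1 − k)). Then all trajectories (x, v̂, v̄, â, ā) remain bounded, f̃ ∈ L² ∩ L∞, s ∈ L² ∩ L∞, (v̂ − v̄) ∈ L², (â − ā) ∈ L², (v̂ − â) ∈ L², s(t) → 0 as t → ∞, and x(t) → x_d(t). -/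
open MeasureTheory Filter
open scoped RealInnerProductSpace ENNReal

noncomputable section

/-- The signal `g` is square-integrable (`L²`) on `[0, ∞)`. -/
def InL2 {F : Type*} [NormedAddCommGroup F] (g : ℝ → F) : Prop :=
  ∫⁻ t in Set.Ici (0 : ℝ), ENNReal.ofReal (‖g t‖ ^ 2) < ⊤

/-- The signal `g` is bounded (`L∞`) on `[0, ∞)`. -/
def InLinf {F : Type*} [NormedAddCommGroup F] (g : ℝ → F) : Prop :=
  ∃ C : ℝ, ∀ t : ℝ, 0 ≤ t → ‖g t‖ ≤ C

set_option maxHeartbeats 1000000 in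
private lemma young' {m u v c d : ℝ} (hc : 0 < c) (h : m^2 ≤ 4*c*d) (hu : 0 ≤ u) (hv : 0 ≤ v) :
    m*(u*v) ≤ c*u^2 + d*v^2 := by
  nlinarith [sq_nonneg (2*c*u - m*v), mul_nonneg (mul_nonneg hu hv) (sub_nonneg.2 h), sq_nonneg v]

set_option maxHeartbeats 1000000 in
/-- Master pointwise Lyapunov derivative inequality (scaled by `γ`). -/
private lemma master' {γ β μ ρ k D₁ η A : ℝ} {S F E Q Dl al N I J K₁ K₂ : ℝ}
    (hγ : 0 < γ) (hβ : 0 < β) (hD₁ : 0 < D₁) (hη : 0 < η)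
    (hk₁ : 1/3 ≤ k) (hk₂ : k < 1) (hρ₁ : 0 < ρ) (hρ₂ : ρ ≤ β*(1-k))
    (hμ' : 2*γ*D₁ ≤ μ*(β*(1-k))) (hμpos : 0 < μ)
    (hA : A = γ*η/(50*D₁))
    (hN : N = 1 + μ*al^2) (hal : 0 ≤ al)
    (hE : 0 ≤ E) (hQ : 0 ≤ Q) (hDl : 0 ≤ Dl)
    (hI : (1/D₁)*F^2 ≤ I*F)
    (hJ : F*J ≤ |F| * (al*E))
    (hK₁ : -K₁ ≤ E*Q) (hK₂ : -K₂ ≤ E*Dl) :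
    -(A*η)*S^2 + A*(S*F) - γ*(I*F) + (5*γ/3)*(F*J) - ρ*Dl^2 - (2*ρ/3)*K₂
      - (2*β*N/3)*E^2 - (4*k*β*N/3)*K₁ - (4*k^2*β*N/3)*Q^2
    ≤ -(A*η/2)*S^2 - (γ/(100*D₁))*F^2 - (ρ/50)*Dl^2
      - (13/882)*β*E^2 - (2/675)*β*Q^2 := by
  have hA0 : 0 < A := by rw [hA]; positivity
  have hk0 : 0 < k := lt_of_lt_of_le (by norm_num) hk₁
  have h1mk0 : 0 < 1-k := by linarith
  have hN1 : 1 ≤ N := by nlinarith [mul_nonneg hμpos.le (sq_nonneg al)]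
  have hN0 : 0 < N := by linarith
  have hNE : (0:ℝ) ≤ N*E^2 := by positivity
  have hNQ : (0:ℝ) ≤ N*Q^2 := by positivity
  have h1 : A*(S*F) ≤ (A*η/2)*S^2 + (γ/(100*D₁))*F^2 := by
    have hy := young' (m := A) (u := |S|) (v := |F|) (c := A*η/2) (d := A/(2*η))
      (by positivity) (by rw [(by field_simp; ring : 4*(A*η/2)*(A/(2*η)) = A^2)])
      (abs_nonneg _) (abs_nonneg _)
    have he : A/(2*η) = γ/(100*D₁) := by rw [hA]; field_simp; ring
    rw [he] at hy
    calc A*(S*F) ≤ A*(|S| * |F|) := by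
          rcases le_total (S*F) (|S| * |F|) with h|h
          · exact mul_le_mul_of_nonneg_left h hA0.le
          · have h5 := le_abs_self (S*F); rw [abs_mul] at h5
            have heq : S*F = |S| * |F| := le_antisymm h5 h
            rw [heq]
      _ ≤ (A*η/2)*|S|^2 + (γ/(100*D₁))*|F|^2 := hy
      _ = (A*η/2)*S^2 + (γ/(100*D₁))*F^2 := by rw [sq_abs, sq_abs]
  have h2 : (5*γ/3)*(F*J) ≤ (49*γ/(50*D₁))*F^2 + (625/1764)*(β*((1-k)*(N*E^2))) := by
    have hy := young' (m := (5:ℝ)/3) (u := |F|) (v := al*E) (c := 49/(50*D₁)) (d := 625*D₁/882)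
      (by positivity)
      (by rw [(by field_simp; ring : 4*(49/(50*D₁))*(625*D₁/882) = (25:ℝ)/9)]; norm_num)
      (abs_nonneg _) (mul_nonneg hal hE)
    have step1 : (5*γ/3)*(F*J) ≤ γ*((49/(50*D₁))*F^2 + (625*D₁/882)*(al*E)^2) := by
      have hb : (5/3)*(F*J) ≤ (49/(50*D₁))*F^2 + (625*D₁/882)*(al*E)^2 := by
        calc (5/3)*(F*J) ≤ (5/3)*(|F| * (al*E)) := by
              have := mul_le_mul_of_nonneg_left hJ (by norm_num : (0:ℝ) ≤ 5/3); linarith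
          _ ≤ (49/(50*D₁))*|F|^2 + (625*D₁/882)*(al*E)^2 := hy
          _ = (49/(50*D₁))*F^2 + (625*D₁/882)*(al*E)^2 := by rw [sq_abs]
      calc (5*γ/3)*(F*J) = γ*((5/3)*(F*J)) := by ring
        _ ≤ γ*((49/(50*D₁))*F^2 + (625*D₁/882)*(al*E)^2) := mul_le_mul_of_nonneg_left hb hγ.le
    have step2 : γ*((625*D₁/882)*(al*E)^2) ≤ (625/1764)*(β*((1-k)*(N*E^2))) := by
      have hal2 : μ*al^2 ≤ N := by nlinarith
      have h5' : 2*γ*(D₁*al^2) ≤ β*(1-k)*N := by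
        nlinarith [mul_le_mul_of_nonneg_right hμ' (sq_nonneg al),
          mul_le_mul_of_nonneg_left hal2 (mul_pos hβ h1mk0).le]
      nlinarith [mul_le_mul_of_nonneg_right h5' (sq_nonneg E)]
    calc (5*γ/3)*(F*J) ≤ γ*((49/(50*D₁))*F^2) + γ*((625*D₁/882)*(al*E)^2) := by
          rw [← mul_add]; exact step1
      _ ≤ (49*γ/(50*D₁))*F^2 + (625/1764)*(β*((1-k)*(N*E^2))) := by
          have he2 : γ*((49/(50*D₁))*F^2) = (49*γ/(50*D₁))*F^2 := by ring
          linarith [step2]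
  have h4 : -(2*ρ/3)*K₂ ≤ (49/50)*ρ*Dl^2 + (50/441)*(β*((1-k)*(N*E^2))) := by
    have hy := young' (m := (2:ℝ)/3) (u := Dl) (v := E) (c := 49/50) (d := 50/441)
      (by norm_num) (by norm_num) hDl hE
    have hb : -(2*ρ/3)*K₂ ≤ ρ*((49/50)*Dl^2 + (50/441)*E^2) := by
      calc -(2*ρ/3)*K₂ = ρ*((2/3)*(-K₂)) := by ring
        _ ≤ ρ*((2/3)*(Dl*E)) := by
            apply mul_le_mul_of_nonneg_left _ hρ₁.le
            rw [mul_comm Dl E]; exact mul_le_mul_of_nonneg_left hK₂ (by norm_num)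
        _ ≤ ρ*((49/50)*Dl^2 + (50/441)*E^2) := mul_le_mul_of_nonneg_left hy hρ₁.le
    have hrE : ρ*((50/441)*E^2) ≤ (50/441)*(β*((1-k)*(N*E^2))) := by
      nlinarith [mul_le_mul_of_nonneg_right hρ₂ (sq_nonneg E),
        mul_le_mul_of_nonneg_left (le_mul_of_one_le_left (sq_nonneg E) hN1)
          (mul_pos hβ h1mk0).le]
    nlinarith [hb, hrE]
  have h5 : -(4*k*β*N/3)*K₁ ≤ (50/147)*(β*(N*E^2)) + (98/75)*(k^2*(β*(N*Q^2))) := by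
    have hy := young' (m := 4*k/3) (u := E) (v := Q) (c := 50/147) (d := 98*k^2/75)
      (by norm_num) (by nlinarith) hE hQ
    have hbn : (0:ℝ) ≤ β*N := by positivity
    calc -(4*k*β*N/3)*K₁ = (β*N)*((4*k/3)*(-K₁)) := by ring
      _ ≤ (β*N)*((4*k/3)*(E*Q)) := by
          apply mul_le_mul_of_nonneg_left _ hbn
          apply mul_le_mul_of_nonneg_left hK₁ (by positivity)
      _ ≤ (β*N)*((50/147)*E^2 + (98*k^2/75)*Q^2) := mul_le_mul_of_nonneg_left hy hbn
      _ = (50/147)*(β*(N*E^2)) + (98/75)*(k^2*(β*(N*Q^2))) := by ring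
  have h6 : -(γ*(I*F)) ≤ -(γ/D₁)*F^2 := by
    have h := mul_le_mul_of_nonneg_left hI hγ.le
    calc -(γ*(I*F)) ≤ -(γ*((1/D₁)*F^2)) := by linarith
      _ = -(γ/D₁)*F^2 := by ring
  have hEa : (625/1764)*(β*((1-k)*(N*E^2))) + (50/441)*(β*((1-k)*(N*E^2)))
      + (50/147)*(β*(N*E^2)) - (2*β*N/3)*E^2 ≤ -(13/882)*β*E^2 := by
    have hR : β*((1-k)*(N*E^2)) ≤ (2/3)*(β*(N*E^2)) := by
      have h := mul_le_mul_of_nonneg_right (show 1-k ≤ (2:ℝ)/3 by linarith) hNE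
      calc β*((1-k)*(N*E^2)) ≤ β*((2/3)*(N*E^2)) := mul_le_mul_of_nonneg_left h hβ.le
        _ = (2/3)*(β*(N*E^2)) := by ring
    have hP : β*E^2 ≤ β*(N*E^2) := by
      have hE2 : E^2 ≤ N*E^2 := le_mul_of_one_le_left (sq_nonneg E) hN1
      exact mul_le_mul_of_nonneg_left hE2 hβ.le
    linarith [hR, hP]
  have hQa : (98/75)*(k^2*(β*(N*Q^2))) - (4*k^2*β*N/3)*Q^2 ≤ -(2/675)*β*Q^2 := by
    have hk2 : (1:ℝ)/9 ≤ k^2 := by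
      rw [show (1:ℝ)/9 = (1/3)^2 by norm_num]
      exact pow_le_pow_left₀ (by norm_num) hk₁ 2
    have hP : β*Q^2 ≤ β*(N*Q^2) := by
      have hQ2 : Q^2 ≤ N*Q^2 := le_mul_of_one_le_left (sq_nonneg Q) hN1
      exact mul_le_mul_of_nonneg_left hQ2 hβ.le
    have e1 : (98/75)*(k^2*(β*(N*Q^2))) - (4*k^2*β*N/3)*Q^2 = -(2/75)*(k^2*(β*(N*Q^2))) := by
      ring
    rw [e1]
    have h2 : (1/9)*(β*(N*Q^2)) ≤ k^2*(β*(N*Q^2)) :=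
      mul_le_mul_of_nonneg_right hk2 (mul_nonneg hβ.le hNQ)
    linarith [hP, h2]
  have hFa : -(γ/D₁)*F^2 + (49*γ/(50*D₁))*F^2 + (γ/(100*D₁))*F^2 = -(γ/(100*D₁))*F^2 := by
    field_simp; ring
  linarith [h1, h2, h4, h5, h6, hEa, hQa, hFa]

set_option maxHeartbeats 1000000 in
private lemma lintegral_neg_deriv_le' {V V' : ℝ → ℝ}
    (hd : ∀ t, 0 ≤ t → HasDerivAt V (V' t) t)
    (hneg : ∀ t, 0 ≤ t → V' t ≤ 0)
    (hpos : ∀ t, 0 ≤ t → 0 ≤ V t) :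
    ∫⁻ t in Set.Ici (0:ℝ), ENNReal.ofReal (-V' t) ≤ ENNReal.ofReal (V 0) := by
  have hcont : ∀ t, 0 ≤ t → ContinuousAt V t := fun t ht => (hd t ht).continuousAt
  have hanti : AntitoneOn V (Set.Ici (0:ℝ)) := by
    apply antitoneOn_of_deriv_nonpos (convex_Ici 0)
    · exact fun t ht => (hcont t ht).continuousWithinAt
    · intro t ht
      rw [interior_Ici] at ht
      exact ((hd t (le_of_lt ht)).differentiableAt).differentiableWithinAt
    · intro t ht
      rw [interior_Ici] at ht
      rw [(hd t (le_of_lt ht)).deriv]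
      exact hneg t (le_of_lt ht)
  have hshiftcont : ∀ (h : ℝ), 0 ≤ h → ∀ c : ℝ,
      ContinuousOn (fun t => V (t + h)) (Set.Icc (0:ℝ) c) := by
    intro h h0 c
    apply ContinuousOn.comp (f := fun t => t + h) (g := V) (t := Set.Ici (0:ℝ))
    · exact fun u hu => (hcont u hu).continuousWithinAt
    · exact (continuous_id.add continuous_const).continuousOn
    · intro t ht
      simp only [Set.mem_Ici]
      linarith [ht.1]
  have key : ∀ b : ℕ, (∫⁻ t in Set.Ioc (0:ℝ) ((b:ℝ)+1), ENNReal.ofReal (-V' t))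
      ≤ ENNReal.ofReal (V 0) := by
    intro b
    set c : ℝ := (b:ℝ) + 1 with hc
    have hc1 : (1:ℝ) ≤ c := by
      rw [hc]; have : (0:ℝ) ≤ (b:ℝ) := Nat.cast_nonneg b; linarith
    have hVcont : ∀ d : ℝ, ContinuousOn V (Set.Icc (0:ℝ) d) :=
      fun d t ht => (hcont t ht.1).continuousWithinAt
    set g : ℕ → ℝ → ℝ := fun n t => ((n:ℝ)+1) * (V t - V (t + 1/((n:ℝ)+1))) with hg
    have hn0 : ∀ n : ℕ, (0:ℝ) < 1/((n:ℝ)+1) := by intro n; positivity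
    have hn1 : ∀ n : ℕ, 1/((n:ℝ)+1) ≤ 1 := by
      intro n
      rw [div_le_one (by positivity)]
      have : (0:ℝ) ≤ (n:ℝ) := Nat.cast_nonneg n
      linarith
    have hgcont : ∀ n : ℕ, ContinuousOn (g n) (Set.Icc (0:ℝ) c) := by
      intro n
      apply ContinuousOn.mul continuousOn_const
      exact (hVcont c).sub (hshiftcont (1/((n:ℝ)+1)) (hn0 n).le c)
    have hmeas : ∀ n : ℕ, AEMeasurable (fun t => ENNReal.ofReal (g n t))
        (volume.restrict (Set.Ioc (0:ℝ) c)) := by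
      intro n
      apply ENNReal.measurable_ofReal.comp_aemeasurable
      exact ((hgcont n).mono Set.Ioc_subset_Icc_self).aemeasurable measurableSet_Ioc
    have hlim : ∀ t ∈ Set.Ioc (0:ℝ) c,
        Tendsto (fun n : ℕ => ENNReal.ofReal (g n t)) atTop (nhds (ENNReal.ofReal (-V' t))) := by
      intro t ht
      apply (ENNReal.continuous_ofReal.tendsto _).comp
      have hslope := hasDerivAt_iff_tendsto_slope.1 (hd t ht.1.le)
      have hseq : Tendsto (fun n : ℕ => t + 1/((n:ℝ)+1)) atTop (nhdsWithin t {t}ᶜ) := by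
        apply tendsto_nhdsWithin_of_tendsto_nhds_of_eventually_within
        · have h2 : Tendsto (fun n : ℕ => 1/((n:ℝ)+1)) atTop (nhds 0) :=
            tendsto_one_div_add_atTop_nhds_zero_nat
          have h3 := tendsto_const_nhds.add h2 (f := fun _ : ℕ => t)
          simpa using h3
        · filter_upwards with m
          simp only [Set.mem_compl_iff, Set.mem_singleton_iff]
          have := hn0 m
          intro hcontra
          nlinarith [congrArg (fun z => z - t) hcontra]
      have hcomp := hslope.comp hseq
      have heq : (fun n : ℕ => g n t)
          = fun n : ℕ => -((slope V t ∘ fun m : ℕ => t + 1/((m:ℝ)+1)) n) := by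
        funext m
        have hne : (1:ℝ)/((m:ℝ)+1) ≠ 0 := (hn0 m).ne'
        simp only [Function.comp_apply, slope_def_field, hg]
        field_simp
        ring
      rw [heq]
      simpa using hcomp.neg
    have hbound : ∀ n : ℕ, (∫⁻ t in Set.Ioc (0:ℝ) c, ENNReal.ofReal (g n t))
        ≤ ENNReal.ofReal (V 0) := by
      intro n
      have hh0 := hn0 n
      have hh1 := hn1 n
      set h : ℝ := 1/((n:ℝ)+1) with hh
      have hVint : ∀ u v : ℝ, 0 ≤ u → u ≤ v → IntervalIntegrable V volume u v := by
        intro u v hu huv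
        apply ContinuousOn.intervalIntegrable
        rw [Set.uIcc_of_le huv]
        exact fun t ht => (hcont t (le_trans hu ht.1)).continuousWithinAt
      have hint0c : IntervalIntegrable V volume 0 c := hVint 0 c le_rfl (by linarith)
      have hintsh : IntervalIntegrable (fun t => V (t + h)) volume 0 c := by
        have h2 := (hVint h (c+h) hh0.le (by linarith)).comp_add_right h
        simpa using h2
      have hgne : ∀ t : ℝ, g n t = ((n:ℝ)+1) * (V t - V (t+h)) := fun t => rfl
      have hgnn : ∀ t ∈ Set.Ioc (0:ℝ) c, 0 ≤ g n t := by
        intro t ht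
        have hmono := hanti (show t ∈ Set.Ici (0:ℝ) from ht.1.le)
          (show t + h ∈ Set.Ici (0:ℝ) by simp only [Set.mem_Ici]; linarith [ht.1.le])
          (by linarith)
        rw [hgne t]
        exact mul_nonneg (by positivity) (by linarith)
      have hgint : IntegrableOn (g n) (Set.Ioc (0:ℝ) c) :=
        ((hgcont n).integrableOn_compact isCompact_Icc).mono_set Set.Ioc_subset_Icc_self
      have hIoc : (∫ t in Set.Ioc (0:ℝ) c, g n t) = ∫ t in (0:ℝ)..c, g n t :=
        (intervalIntegral.integral_of_le (by linarith : (0:ℝ) ≤ c)).symm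
      have hint1 : (∫ t in (0:ℝ)..c, g n t)
          = ((n:ℝ)+1) * ((∫ t in (0:ℝ)..c, V t) - ∫ t in (0:ℝ)..c, V (t + h)) := by
        simp only [hgne]
        rw [intervalIntegral.integral_const_mul, intervalIntegral.integral_sub hint0c hintsh]
      have hshift : (∫ t in (0:ℝ)..c, V (t + h)) = ∫ t in h..(c+h), V t := by
        rw [intervalIntegral.integral_comp_add_right]
        norm_num
      have hsplit1 : (∫ t in (0:ℝ)..c, V t) = (∫ t in (0:ℝ)..h, V t) + ∫ t in h..c, V t :=
        (intervalIntegral.integral_add_adjacent_intervals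
          (hVint 0 h le_rfl hh0.le) (hVint h c hh0.le (by linarith))).symm
      have hsplit2 : (∫ t in h..(c+h), V t) = (∫ t in h..c, V t) + ∫ t in c..(c+h), V t :=
        (intervalIntegral.integral_add_adjacent_intervals
          (hVint h c hh0.le (by linarith)) (hVint c (c+h) (by linarith) (by linarith))).symm
      have hub : (∫ t in (0:ℝ)..h, V t) ≤ h * V 0 := by
        have hm : (∫ t in (0:ℝ)..h, V t) ≤ ∫ _t in (0:ℝ)..h, V 0 := by
          apply intervalIntegral.integral_mono_on hh0.le (hVint 0 h le_rfl hh0.le)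
            intervalIntegrable_const
          intro t ht
          exact hanti Set.self_mem_Ici (ht.1 : (0:ℝ) ≤ t) ht.1
        simpa using hm
      have hlb : 0 ≤ ∫ t in c..(c+h), V t := by
        apply intervalIntegral.integral_nonneg (by linarith)
        intro t ht
        exact hpos t (by linarith [ht.1])
      have hle : (∫ t in Set.Ioc (0:ℝ) c, g n t) ≤ V 0 := by
        rw [hIoc, hint1, hsplit1, hshift, hsplit2]
        have hcn : ((n:ℝ)+1) * h = 1 := by rw [hh]; field_simp
        calc ((n:ℝ)+1) * (((∫ t in (0:ℝ)..h, V t) + ∫ t in h..c, V t)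
              - ((∫ t in h..c, V t) + ∫ t in c..(c+h), V t))
            = ((n:ℝ)+1) * ((∫ t in (0:ℝ)..h, V t) - ∫ t in c..(c+h), V t) := by ring
          _ ≤ ((n:ℝ)+1) * (h * V 0) := by
              apply mul_le_mul_of_nonneg_left _ (by positivity)
              linarith
          _ = V 0 := by rw [← mul_assoc, hcn, one_mul]
      calc (∫⁻ t in Set.Ioc (0:ℝ) c, ENNReal.ofReal (g n t))
          = ENNReal.ofReal (∫ t in Set.Ioc (0:ℝ) c, g n t) := by
            rw [← ofReal_integral_eq_lintegral_ofReal hgint]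
            rw [EventuallyLE, ae_restrict_iff' measurableSet_Ioc]
            filter_upwards with t ht
            exact hgnn t ht
        _ ≤ ENNReal.ofReal (V 0) := ENNReal.ofReal_le_ofReal hle
    have hfatou := lintegral_liminf_le' (μ := volume.restrict (Set.Ioc (0:ℝ) c)) (u := atTop) hmeas
    have hcongr : (∫⁻ t in Set.Ioc (0:ℝ) c, ENNReal.ofReal (-V' t))
        = ∫⁻ t in Set.Ioc (0:ℝ) c,
            Filter.liminf (fun n : ℕ => ENNReal.ofReal (g n t)) atTop := by
      apply lintegral_congr_ae
      rw [EventuallyEq, ae_restrict_iff' measurableSet_Ioc]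
      filter_upwards with t ht
      exact ((hlim t ht).liminf_eq).symm
    rw [hcongr]
    refine le_trans hfatou ?_
    apply Filter.liminf_le_of_frequently_le'
    exact Filter.Frequently.of_forall hbound
  have hIoi : (∫⁻ t in Set.Ici (0:ℝ), ENNReal.ofReal (-V' t))
      = ∫⁻ t in Set.Ioi (0:ℝ), ENNReal.ofReal (-V' t) :=
    (setLIntegral_congr (Ioi_ae_eq_Ici (a := (0:ℝ)))).symm
  rw [hIoi]
  have hderiv_eq : ∀ t ∈ Set.Ioi (0:ℝ),
      ENNReal.ofReal (-V' t) = ENNReal.ofReal (-deriv V t) := by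
    intro t ht
    rw [(hd t (le_of_lt ht)).deriv]
  have hIoideq : (∫⁻ t in Set.Ioi (0:ℝ), ENNReal.ofReal (-V' t))
      = ∫⁻ t in Set.Ioi (0:ℝ), ENNReal.ofReal (-deriv V t) := by
    apply lintegral_congr_ae
    rw [EventuallyEq, ae_restrict_iff' measurableSet_Ioi]
    filter_upwards with t ht
    exact hderiv_eq t ht
  rw [hIoideq]
  set D : ℝ → ENNReal := fun t => ENNReal.ofReal (-deriv V t) with hD
  have hDmeas : Measurable D := ENNReal.measurable_ofReal.comp (measurable_deriv V).neg
  set fb : ℕ → ℝ → ENNReal := fun b => (Set.Ioc (0:ℝ) ((b:ℝ)+1)).indicator D with hfb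
  have hfbmeas : ∀ b, Measurable (fb b) := fun b => hDmeas.indicator measurableSet_Ioc
  have hfbmono : Monotone fb := by
    intro b b' hbb t
    apply Set.indicator_le_indicator_of_subset
    · apply Set.Ioc_subset_Ioc le_rfl
      have : (b:ℝ) ≤ (b':ℝ) := Nat.cast_le.2 hbb
      linarith
    · intro u; exact zero_le
  have hsup : (fun t => ⨆ b, fb b t) = (Set.Ioi (0:ℝ)).indicator D := by
    funext t
    apply le_antisymm
    · apply iSup_le
      intro b
      apply Set.indicator_le_indicator_of_subset Set.Ioc_subset_Ioi_self
      intro u; exact zero_le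
    · by_cases ht : t ∈ Set.Ioi (0:ℝ)
      · obtain ⟨b, hb⟩ := exists_nat_ge t
        rw [Set.indicator_of_mem ht]
        have htb : t ∈ Set.Ioc (0:ℝ) ((b:ℝ)+1) := ⟨ht, by linarith⟩
        calc D t = fb b t := (Set.indicator_of_mem htb D).symm
          _ ≤ ⨆ b, fb b t := le_iSup (fun b => fb b t) b
      · rw [Set.indicator_of_notMem ht]
        exact zero_le
  calc (∫⁻ t in Set.Ioi (0:ℝ), D t) = ∫⁻ t, (Set.Ioi (0:ℝ)).indicator D t := by
        rw [lintegral_indicator measurableSet_Ioi]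
    _ = ∫⁻ t, ⨆ b, fb b t := by rw [hsup]
    _ = ⨆ b, ∫⁻ t, fb b t := lintegral_iSup hfbmeas hfbmono
    _ ≤ ENNReal.ofReal (V 0) := by
        apply iSup_le
        intro b
        rw [show (fb b) = (Set.Ioc (0:ℝ) ((b:ℝ)+1)).indicator D from rfl,
          lintegral_indicator measurableSet_Ioc]
        calc (∫⁻ t in Set.Ioc (0:ℝ) ((b:ℝ)+1), D t)
            = ∫⁻ t in Set.Ioc (0:ℝ) ((b:ℝ)+1), ENNReal.ofReal (-V' t) := by
              apply lintegral_congr_ae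
              rw [EventuallyEq, ae_restrict_iff' measurableSet_Ioc]
              filter_upwards with t ht
              exact (hderiv_eq t ht.1).symm
          _ ≤ ENNReal.ofReal (V 0) := key b

set_option maxHeartbeats 1000000 in
private lemma tendsto_zero_of_sq_integrable' {s : ℝ → ℝ} {L : ℝ} (hL : 0 < L)
    (hlip : ∀ u v : ℝ, 0 ≤ u → 0 ≤ v → |s u - s v| ≤ L * |u - v|)
    (hL2 : ∫⁻ t in Set.Ici (0:ℝ), ENNReal.ofReal ((s t)^2) < ⊤) :
    Tendsto s atTop (nhds 0) := by
  by_contra hcon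
  rw [Metric.tendsto_atTop] at hcon
  push_neg at hcon
  obtain ⟨ε, hε, hfreq⟩ := hcon
  set δ : ℝ := ε/(2*L) with hδ
  have hδ0 : 0 < δ := by positivity
  have hpick : ∀ N : ℝ, ∃ t : ℝ, max N 0 ≤ t ∧ ε ≤ |s t| := by
    intro N
    obtain ⟨t, ht1, ht2⟩ := hfreq (max N 0)
    refine ⟨t, ht1, ?_⟩
    rw [Real.dist_eq, sub_zero] at ht2
    exact ht2
  set F : ℝ → ℝ := fun N => (hpick N).choose with hF
  have hFspec : ∀ N : ℝ, max N 0 ≤ F N ∧ ε ≤ |s (F N)| := fun N => (hpick N).choose_spec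
  set u : ℕ → ℝ := fun n => Nat.rec (F 0) (fun _ prev => F (prev + δ)) n with hu
  have hu0 : ∀ n, 0 ≤ u n := by
    intro n
    cases n with
    | zero => exact le_trans (le_max_right 0 0) (hFspec 0).1
    | succ m => exact le_trans (le_max_right _ 0) (hFspec (u m + δ)).1
  have hueps : ∀ n, ε ≤ |s (u n)| := by
    intro n
    cases n with
    | zero => exact (hFspec 0).2
    | succ m => exact (hFspec (u m + δ)).2
  have hustep : ∀ n, u n + δ ≤ u (n+1) := by
    intro n
    exact le_trans (le_max_left _ 0) (hFspec (u n + δ)).1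
  have humono : ∀ m n, m < n → u m + δ ≤ u n := by
    intro m n hmn
    induction n with
    | zero => omega
    | succ j ih =>
      rcases Nat.lt_or_ge m j with h | h
      · have := ih h
        have h2 := hustep j
        linarith
      · have : m = j := by omega
        subst this
        exact hustep m
  have hlow : ∀ n, ∀ t ∈ Set.Ioc (u n) (u n + δ), ε/2 ≤ |s t| := by
    intro n t ht
    have h1 : |s (u n) - s t| ≤ L * |u n - t| :=
      hlip (u n) t (hu0 n) (le_trans (hu0 n) ht.1.le)
    have h2 : |u n - t| ≤ δ := by
      rw [abs_sub_comm, abs_of_nonneg (by linarith [ht.1.le] : 0 ≤ t - u n)]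
      linarith [ht.2]
    have h3 : L * |u n - t| ≤ L * δ := mul_le_mul_of_nonneg_left h2 hL.le
    have h4 : L * δ = ε/2 := by rw [hδ]; field_simp
    have := hueps n
    have htri : |s (u n)| - |s t| ≤ |s (u n) - s t| := by
      have := abs_sub_abs_le_abs_sub (s (u n)) (s t)
      linarith
    linarith
  set A : ℕ → Set ℝ := fun n => Set.Ioc (u n) (u n + δ) with hA
  have hAmeas : ∀ n, MeasurableSet (A n) := fun n => measurableSet_Ioc
  have hAdisj : Pairwise (Function.onFun Disjoint A) := by
    intro m n hmn
    rcases lt_or_gt_of_ne hmn with h | h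
    · apply Set.disjoint_left.2
      intro t htm htn
      have := humono m n h
      have := htm.2
      have := htn.1
      linarith
    · apply Set.disjoint_left.2
      intro t htm htn
      have := humono n m h
      have := htn.2
      have := htm.1
      linarith
  have hsub : (⋃ n, A n) ⊆ Set.Ici (0:ℝ) := by
    intro t ht
    obtain ⟨n, hn⟩ := Set.mem_iUnion.1 ht
    exact le_trans (hu0 n) hn.1.le
  have hlower : ∀ n, ENNReal.ofReal (ε^2/4) * ENNReal.ofReal δ
      ≤ ∫⁻ t in A n, ENNReal.ofReal ((s t)^2) := by
    intro n
    have hvol : volume (A n) = ENNReal.ofReal δ := by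
      rw [hA]
      simp only [Real.volume_Ioc]
      congr 1
      ring
    calc ENNReal.ofReal (ε^2/4) * ENNReal.ofReal δ
        = ∫⁻ _t in A n, ENNReal.ofReal (ε^2/4) := by rw [setLIntegral_const, hvol]
      _ ≤ ∫⁻ t in A n, ENNReal.ofReal ((s t)^2) := by
          apply lintegral_mono_ae
          rw [ae_restrict_iff' (hAmeas n)]
          filter_upwards with t ht
          apply ENNReal.ofReal_le_ofReal
          have := hlow n t ht
          nlinarith [abs_nonneg (s t), sq_abs (s t)]
  have htop : (∫⁻ t in Set.Ici (0:ℝ), ENNReal.ofReal ((s t)^2)) = ⊤ := by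
    have h1 : (∫⁻ t in ⋃ n, A n, ENNReal.ofReal ((s t)^2))
        ≤ ∫⁻ t in Set.Ici (0:ℝ), ENNReal.ofReal ((s t)^2) :=
      lintegral_mono_set hsub
    have h2 : (∫⁻ t in ⋃ n, A n, ENNReal.ofReal ((s t)^2))
        = ∑' n, ∫⁻ t in A n, ENNReal.ofReal ((s t)^2) :=
      lintegral_iUnion hAmeas hAdisj _
    have h3 : (⊤ : ENNReal) ≤ ∑' n, ∫⁻ t in A n, ENNReal.ofReal ((s t)^2) := by
      have hc : ENNReal.ofReal (ε^2/4) * ENNReal.ofReal δ ≠ 0 := by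
        apply mul_ne_zero <;> · simp only [ne_eq, ENNReal.ofReal_eq_zero, not_le]; positivity
      calc (⊤ : ENNReal) = ∑' _n : ℕ, ENNReal.ofReal (ε^2/4) * ENNReal.ofReal δ :=
            (ENNReal.tsum_const_eq_top_of_ne_zero hc).symm
        _ ≤ ∑' n, ∫⁻ t in A n, ENNReal.ofReal ((s t)^2) := ENNReal.tsum_le_tsum hlower
    have := le_trans h3 (le_of_eq h2.symm)
    exact top_le_iff.1 (le_trans this h1)
  rw [htop] at hL2
  exact absurd hL2 (lt_irrefl ⊤)

private lemma inL2_of_pointwise' {g Vd : ℝ → ℝ} {c V0 : ℝ} (hc : 0 < c)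
    (hb : ∀ t, 0 ≤ t → c * (g t)^2 ≤ -Vd t)
    (hI : ∫⁻ t in Set.Ici (0:ℝ), ENNReal.ofReal (-Vd t) ≤ ENNReal.ofReal V0) :
    ∫⁻ t in Set.Ici (0:ℝ), ENNReal.ofReal ((g t)^2) < ⊤ := by
  have h1 : (∫⁻ t in Set.Ici (0:ℝ), ENNReal.ofReal ((g t)^2))
      ≤ ∫⁻ t in Set.Ici (0:ℝ), ENNReal.ofReal (1/c) * ENNReal.ofReal (-Vd t) := by
    apply lintegral_mono_ae
    rw [ae_restrict_iff' measurableSet_Ici]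
    filter_upwards with t ht
    rw [← ENNReal.ofReal_mul (by positivity)]
    apply ENNReal.ofReal_le_ofReal
    calc (g t)^2 = (1/c)*(c*(g t)^2) := by field_simp
      _ ≤ (1/c)*(-Vd t) := mul_le_mul_of_nonneg_left (hb t ht) (by positivity)
  have h2 : (∫⁻ t in Set.Ici (0:ℝ), ENNReal.ofReal (1/c) * ENNReal.ofReal (-Vd t))
      = ENNReal.ofReal (1/c) * ∫⁻ t in Set.Ici (0:ℝ), ENNReal.ofReal (-Vd t) :=
    lintegral_const_mul' _ _ ENNReal.ofReal_ne_top
  calc (∫⁻ t in Set.Ici (0:ℝ), ENNReal.ofReal ((g t)^2))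
      ≤ ENNReal.ofReal (1/c) * ∫⁻ t in Set.Ici (0:ℝ), ENNReal.ofReal (-Vd t) := by
        rw [← h2]; exact h1
    _ ≤ ENNReal.ofReal (1/c) * ENNReal.ofReal V0 :=
        mul_le_mul_right hI _
    _ < ⊤ := by
        rw [← ENNReal.ofReal_mul (by positivity)]
        exact ENNReal.ofReal_lt_top

set_option maxHeartbeats 2000000 in
/-- doubly elastic momentum adaptation law for nonlinearly
parameterized dynamics under the monotonicity assumption. -/
theorem doubly_elastic_momentum_adaptation_nonlinear
    {n p : ℕ}
    (x xd : ℝ → EuclideanSpace ℝ (Fin n))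
    (s : ℝ → ℝ)
    (f : EuclideanSpace ℝ (Fin n) → EuclideanSpace ℝ (Fin p) → ℝ → ℝ)
    (α : EuclideanSpace ℝ (Fin n) → ℝ → EuclideanSpace ℝ (Fin p))
    (a : EuclideanSpace ℝ (Fin p))
    (ahat vhat vbar abar : ℝ → EuclideanSpace ℝ (Fin p))
    (η γ β μ ρ k D₁ : ℝ)
    (hη : 0 < η) (hγ : 0 < γ) (hβ : 0 < β) (hD₁ : 0 < D₁)
    (hk₁ : 1 / 3 ≤ k) (hk₂ : k < 1)
    (hρ₁ : 0 < ρ) (hρ₂ : ρ < β * (1 - k))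
    (hμ : 2 * γ * D₁ / (β * (1 - k)) < μ)
    -- monotonicity assumption
    (hmono₁ : ∀ (b : EuclideanSpace ℝ (Fin p)) (ξ : EuclideanSpace ℝ (Fin n)) (t : ℝ),
      0 ≤ t → 0 ≤ ⟪b - a, α ξ t⟫ * (f ξ b t - f ξ a t))
    (hmono₂ : ∀ (b : EuclideanSpace ℝ (Fin p)) (ξ : EuclideanSpace ℝ (Fin n)) (t : ℝ),
      0 ≤ t → (1 / D₁) * |f ξ b t - f ξ a t| ≤ |⟪α ξ t, b - a⟫|)
    -- error dynamics ṡ = -η s + f̃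
    (hs : ∀ t, 0 ≤ t →
      HasDerivAt s (-η * s t + (f (x t) (ahat t) t - f (x t) a t)) t)
    -- doubly elastic momentum adaptation law, 𝒩(t) = 1 + μ‖α(x(t), t)‖²
    (hv : ∀ t, 0 ≤ t →
      HasDerivAt vhat
        (-((γ * (f (x t) (ahat t) t - f (x t) a t)) • α (x t) t) +
          ρ • (vbar t - vhat t)) t)
    (hvb : ∀ t, 0 ≤ t → HasDerivAt vbar (ρ • (vhat t - vbar t)) t)
    (ha : ∀ t, 0 ≤ t →
      HasDerivAt ahat
        ((β * (1 + μ * ‖α (x t) t‖ ^ 2)) • (vhat t - ahat t) +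
          (k * (β * (1 + μ * ‖α (x t) t‖ ^ 2))) • (abar t - ahat t)) t)
    (hab : ∀ t, 0 ≤ t →
      HasDerivAt abar
        ((k * (β * (1 + μ * ‖α (x t) t‖ ^ 2))) • (ahat t - abar t)) t)
    -- f̃ is locally bounded in (x, â) uniformly in t
    (hfloc : ∀ R : ℝ, ∃ M : ℝ,
      ∀ (ξ : EuclideanSpace ℝ (Fin n)) (b : EuclideanSpace ℝ (Fin p)) (t : ℝ),
        0 ≤ t → ‖ξ‖ ≤ R → ‖b‖ ≤ R → |f ξ b t - f ξ a t| ≤ M)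
    -- boundedness of s implies boundedness of x
    (hsx : InLinf s → InLinf x)
    -- s → 0 implies x → x_d
    (hxd : Tendsto s atTop (nhds 0) →
      Tendsto (fun t => x t - xd t) atTop (nhds 0)) :
    InLinf x ∧ InLinf vhat ∧ InLinf vbar ∧ InLinf ahat ∧ InLinf abar ∧
    (InL2 (fun t => f (x t) (ahat t) t - f (x t) a t) ∧
      InLinf (fun t => f (x t) (ahat t) t - f (x t) a t)) ∧
    (InL2 s ∧ InLinf s) ∧
    InL2 (fun t => vhat t - vbar t) ∧
    InL2 (fun t => ahat t - abar t) ∧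
    InL2 (fun t => vhat t - ahat t) ∧
    Tendsto s atTop (nhds 0) ∧
    Tendsto (fun t => x t - xd t) atTop (nhds 0) := by
  -- ## Setup: constants
  have h1mk0 : 0 < 1 - k := by linarith
  have hbk : 0 < β * (1 - k) := mul_pos hβ h1mk0
  have hμpos : 0 < μ := lt_trans (div_pos (by positivity) hbk) hμ
  have hμ' : 2*γ*D₁ ≤ μ*(β*(1-k)) := by
    rw [div_lt_iff₀ hbk] at hμ
    linarith
  have hk0 : 0 < k := lt_of_lt_of_le (by norm_num) hk₁
  set A : ℝ := γ*η/(50*D₁) with hAdef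
  have hA0 : 0 < A := by rw [hAdef]; positivity
  -- ## Lyapunov function and its derivative
  set V : ℝ → ℝ := fun τ => A/2 * s τ ^ 2 + 1/2 * ⟪vhat τ - a, vhat τ - a⟫
      + 1/2 * ⟪vbar τ - a, vbar τ - a⟫ + 1/3 * ⟪ahat τ - vhat τ, ahat τ - vhat τ⟫
      + k/3 * ⟪ahat τ - abar τ, ahat τ - abar τ⟫ with hVdef
  set Vd : ℝ → ℝ := fun t =>
      -(A*η)*(s t)^2 + A*(s t * (f (x t) (ahat t) t - f (x t) a t))
      - γ*(⟪ahat t - a, α (x t) t⟫ * (f (x t) (ahat t) t - f (x t) a t))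
      + (5*γ/3)*((f (x t) (ahat t) t - f (x t) a t) * ⟪ahat t - vhat t, α (x t) t⟫)
      - ρ*‖vbar t - vhat t‖^2
      - (2*ρ/3)*⟪ahat t - vhat t, vbar t - vhat t⟫
      - (2*β*(1 + μ * ‖α (x t) t‖ ^ 2)/3)*‖ahat t - vhat t‖^2
      - (4*k*β*(1 + μ * ‖α (x t) t‖ ^ 2)/3)*⟪ahat t - vhat t, ahat t - abar t⟫
      - (4*k^2*β*(1 + μ * ‖α (x t) t‖ ^ 2)/3)*‖ahat t - abar t‖^2 with hVdDef
  clear_value A V Vd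
  have hVt : ∀ τ, V τ = A/2 * s τ ^ 2 + 1/2 * ⟪vhat τ - a, vhat τ - a⟫
      + 1/2 * ⟪vbar τ - a, vbar τ - a⟫ + 1/3 * ⟪ahat τ - vhat τ, ahat τ - vhat τ⟫
      + k/3 * ⟪ahat τ - abar τ, ahat τ - abar τ⟫ := fun τ => by rw [hVdef]
  have hVd : ∀ t, 0 ≤ t → HasDerivAt V (Vd t) t := by
    intro t ht
    rw [hVdef, show Vd t =
      -(A*η)*(s t)^2 + A*(s t * (f (x t) (ahat t) t - f (x t) a t))
      - γ*(⟪ahat t - a, α (x t) t⟫ * (f (x t) (ahat t) t - f (x t) a t))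
      + (5*γ/3)*((f (x t) (ahat t) t - f (x t) a t) * ⟪ahat t - vhat t, α (x t) t⟫)
      - ρ*‖vbar t - vhat t‖^2
      - (2*ρ/3)*⟪ahat t - vhat t, vbar t - vhat t⟫
      - (2*β*(1 + μ * ‖α (x t) t‖ ^ 2)/3)*‖ahat t - vhat t‖^2
      - (4*k*β*(1 + μ * ‖α (x t) t‖ ^ 2)/3)*⟪ahat t - vhat t, ahat t - abar t⟫
      - (4*k^2*β*(1 + μ * ‖α (x t) t‖ ^ 2)/3)*‖ahat t - abar t‖^2 from by rw [hVdDef]]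
    have hv' := (hv t ht).sub_const a
    have hvb' := (hvb t ht).sub_const a
    have he' := (ha t ht).sub (hv t ht)
    have hq' := (ha t ht).sub (hab t ht)
    have d1 := (hs t ht).pow 2
    have d2 := hv'.inner ℝ hv'
    have d3 := hvb'.inner ℝ hvb'
    have d4 := he'.inner ℝ he'
    have d5 := hq'.inner ℝ hq'
    have hsum := ((((d1.const_mul (A/2)).add (d2.const_mul ((1:ℝ)/2))).add
      (d3.const_mul ((1:ℝ)/2))).add (d4.const_mul ((1:ℝ)/3))).add (d5.const_mul (k/3))
    refine HasDerivAt.congr_deriv hsum ?_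
    simp only [inner_add_right, inner_add_left, inner_sub_right, inner_sub_left,
      inner_neg_right, inner_neg_left, real_inner_smul_right, real_inner_smul_left,
      ← real_inner_self_eq_norm_sq, Pi.sub_apply, Nat.cast_ofNat]
    simp only [real_inner_comm (vbar t) (vhat t), real_inner_comm (ahat t) (vhat t),
      real_inner_comm (abar t) (vhat t), real_inner_comm (abar t) (ahat t),
      real_inner_comm (abar t) (vbar t), real_inner_comm (ahat t) (vbar t),
      real_inner_comm a (vhat t), real_inner_comm a (vbar t),
      real_inner_comm a (ahat t), real_inner_comm a (abar t),
      real_inner_comm (α (x t) t) (vhat t), real_inner_comm (α (x t) t) (vbar t),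
      real_inner_comm (α (x t) t) (ahat t), real_inner_comm (α (x t) t) (abar t),
      real_inner_comm (α (x t) t) a]
    ring
  -- ## pointwise derivative bound
  have hWb : ∀ t, 0 ≤ t → Vd t ≤
      -(A*η/2)*(s t)^2 - (γ/(100*D₁))*(f (x t) (ahat t) t - f (x t) a t)^2
      - (ρ/50)*‖vbar t - vhat t‖^2 - (13/882)*β*‖ahat t - vhat t‖^2
      - (2/675)*β*‖ahat t - abar t‖^2 := by
    intro t ht
    have hIt : (1/D₁)*(f (x t) (ahat t) t - f (x t) a t)^2
        ≤ ⟪ahat t - a, α (x t) t⟫ * (f (x t) (ahat t) t - f (x t) a t) := by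
      have h1 := hmono₁ (ahat t) (x t) t ht
      have h2 := hmono₂ (ahat t) (x t) t ht
      rw [real_inner_comm] at h2
      have h4 : (1/D₁)*|f (x t) (ahat t) t - f (x t) a t| * |f (x t) (ahat t) t - f (x t) a t|
          ≤ |⟪ahat t - a, α (x t) t⟫| * |f (x t) (ahat t) t - f (x t) a t| :=
        mul_le_mul_of_nonneg_right h2 (abs_nonneg _)
      calc (1/D₁)*(f (x t) (ahat t) t - f (x t) a t)^2
          = (1/D₁)*|f (x t) (ahat t) t - f (x t) a t| * |f (x t) (ahat t) t - f (x t) a t| := by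
            rw [mul_assoc, abs_mul_abs_self]; ring
        _ ≤ |⟪ahat t - a, α (x t) t⟫| * |f (x t) (ahat t) t - f (x t) a t| := h4
        _ = |⟪ahat t - a, α (x t) t⟫ * (f (x t) (ahat t) t - f (x t) a t)| := (abs_mul _ _).symm
        _ = ⟪ahat t - a, α (x t) t⟫ * (f (x t) (ahat t) t - f (x t) a t) := abs_of_nonneg h1
    have hJt : (f (x t) (ahat t) t - f (x t) a t) * ⟪ahat t - vhat t, α (x t) t⟫
        ≤ |f (x t) (ahat t) t - f (x t) a t| * (‖α (x t) t‖ * ‖ahat t - vhat t‖) := by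
      have h1 := abs_real_inner_le_norm (ahat t - vhat t) (α (x t) t)
      calc (f (x t) (ahat t) t - f (x t) a t) * ⟪ahat t - vhat t, α (x t) t⟫
          ≤ |(f (x t) (ahat t) t - f (x t) a t) * ⟪ahat t - vhat t, α (x t) t⟫| :=
            le_abs_self _
        _ = |f (x t) (ahat t) t - f (x t) a t| * |⟪ahat t - vhat t, α (x t) t⟫| := abs_mul _ _
        _ ≤ |f (x t) (ahat t) t - f (x t) a t| * (‖ahat t - vhat t‖ * ‖α (x t) t‖) :=
            mul_le_mul_of_nonneg_left h1 (abs_nonneg _)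
        _ = |f (x t) (ahat t) t - f (x t) a t| * (‖α (x t) t‖ * ‖ahat t - vhat t‖) := by ring
    have hK1 : -⟪ahat t - vhat t, ahat t - abar t⟫ ≤ ‖ahat t - vhat t‖ * ‖ahat t - abar t‖ := by
      have h1 := abs_real_inner_le_norm (ahat t - vhat t) (ahat t - abar t)
      have h2 := neg_abs_le ⟪ahat t - vhat t, ahat t - abar t⟫
      linarith
    have hK2 : -⟪ahat t - vhat t, vbar t - vhat t⟫ ≤ ‖ahat t - vhat t‖ * ‖vbar t - vhat t‖ := by
      have h1 := abs_real_inner_le_norm (ahat t - vhat t) (vbar t - vhat t)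
      have h2 := neg_abs_le ⟪ahat t - vhat t, vbar t - vhat t⟫
      linarith
    have hm := master' (S := s t) (F := f (x t) (ahat t) t - f (x t) a t)
      (E := ‖ahat t - vhat t‖) (Q := ‖ahat t - abar t‖) (Dl := ‖vbar t - vhat t‖)
      (al := ‖α (x t) t‖) (N := 1 + μ * ‖α (x t) t‖ ^ 2)
      (I := ⟪ahat t - a, α (x t) t⟫) (J := ⟪ahat t - vhat t, α (x t) t⟫)
      (K₁ := ⟪ahat t - vhat t, ahat t - abar t⟫) (K₂ := ⟪ahat t - vhat t, vbar t - vhat t⟫)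
      hγ hβ hD₁ hη hk₁ hk₂ hρ₁ hρ₂.le hμ' hμpos hAdef rfl (norm_nonneg _)
      (norm_nonneg _) (norm_nonneg _) (norm_nonneg _) hIt hJt hK1 hK2
    calc Vd t = -(A*η)*(s t)^2 + A*(s t * (f (x t) (ahat t) t - f (x t) a t))
      - γ*(⟪ahat t - a, α (x t) t⟫ * (f (x t) (ahat t) t - f (x t) a t))
      + (5*γ/3)*((f (x t) (ahat t) t - f (x t) a t) * ⟪ahat t - vhat t, α (x t) t⟫)
      - ρ*‖vbar t - vhat t‖^2
      - (2*ρ/3)*⟪ahat t - vhat t, vbar t - vhat t⟫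
      - (2*β*(1 + μ * ‖α (x t) t‖ ^ 2)/3)*‖ahat t - vhat t‖^2
      - (4*k*β*(1 + μ * ‖α (x t) t‖ ^ 2)/3)*⟪ahat t - vhat t, ahat t - abar t⟫
      - (4*k^2*β*(1 + μ * ‖α (x t) t‖ ^ 2)/3)*‖ahat t - abar t‖^2 := by rw [hVdDef]
      _ ≤ _ := hm
  have hVdneg : ∀ t, 0 ≤ t → Vd t ≤ 0 := by
    intro t ht
    have h := hWb t ht
    have n1 : 0 ≤ (A*η/2)*(s t)^2 := by positivity
    have n2 : 0 ≤ (γ/(100*D₁))*(f (x t) (ahat t) t - f (x t) a t)^2 := by positivity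
    have n3 : 0 ≤ (ρ/50)*‖vbar t - vhat t‖^2 := by positivity
    have n4 : 0 ≤ (13/882)*β*‖ahat t - vhat t‖^2 := by positivity
    have n5 : 0 ≤ (2/675)*β*‖ahat t - abar t‖^2 := by positivity
    refine le_trans h (by linarith)
  have hVpos : ∀ t, 0 ≤ t → 0 ≤ V t := by
    intro t _
    rw [hVt t]
    have i1 : (0:ℝ) ≤ ⟪vhat t - a, vhat t - a⟫ := real_inner_self_nonneg
    have i2 : (0:ℝ) ≤ ⟪vbar t - a, vbar t - a⟫ := real_inner_self_nonneg
    have i3 : (0:ℝ) ≤ ⟪ahat t - vhat t, ahat t - vhat t⟫ := real_inner_self_nonneg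
    have i4 : (0:ℝ) ≤ ⟪ahat t - abar t, ahat t - abar t⟫ := real_inner_self_nonneg
    have n1 : 0 ≤ A/2 * s t ^ 2 := by positivity
    nlinarith [mul_nonneg hk0.le i4]
  -- ## V is decreasing
  have hanti : AntitoneOn V (Set.Ici (0:ℝ)) := by
    apply antitoneOn_of_deriv_nonpos (convex_Ici 0)
    · exact fun τ hτ => (hVd τ hτ).continuousAt.continuousWithinAt
    · intro τ hτ
      rw [interior_Ici] at hτ
      exact (hVd τ hτ.le).differentiableAt.differentiableWithinAt
    · intro τ hτ
      rw [interior_Ici] at hτ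
      rw [(hVd τ hτ.le).deriv]
      exact hVdneg τ hτ.le
  have hVle : ∀ t, 0 ≤ t → V t ≤ V 0 := fun t ht => hanti Set.self_mem_Ici ht ht
  have hV0 : 0 ≤ V 0 := hVpos 0 le_rfl
  -- ## component bounds from V t ≤ V 0
  have hquads : ∀ t, 0 ≤ t → A/2*(s t)^2 ≤ V 0 ∧ ‖vhat t - a‖^2 ≤ 2*(V 0)
      ∧ ‖vbar t - a‖^2 ≤ 2*(V 0) ∧ ‖ahat t - vhat t‖^2 ≤ 3*(V 0)
      ∧ k*‖ahat t - abar t‖^2 ≤ 3*(V 0) := by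
    intro t ht
    have h := hVle t ht
    rw [hVt t] at h
    rw [real_inner_self_eq_norm_sq, real_inner_self_eq_norm_sq,
      real_inner_self_eq_norm_sq, real_inner_self_eq_norm_sq] at h
    have n0 : 0 ≤ A/2 * s t ^ 2 := by positivity
    have n1 : 0 ≤ ‖vhat t - a‖^2 := sq_nonneg _
    have n2 : 0 ≤ ‖vbar t - a‖^2 := sq_nonneg _
    have n3 : 0 ≤ ‖ahat t - vhat t‖^2 := sq_nonneg _
    have n4 : 0 ≤ k*‖ahat t - abar t‖^2 := mul_nonneg hk0.le (sq_nonneg _)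
    refine ⟨by linarith, by linarith, by linarith, by linarith, by linarith⟩
  have hbs : ∀ t, 0 ≤ t → |s t| ≤ Real.sqrt (2*(V 0)/A) := by
    intro t ht
    have h2 := (hquads t ht).1
    have h3 : (s t)^2 ≤ 2*(V 0)/A := by
      rw [le_div_iff₀ hA0]
      linarith
    calc |s t| = Real.sqrt ((s t)^2) := (Real.sqrt_sq_eq_abs _).symm
      _ ≤ Real.sqrt (2*(V 0)/A) := Real.sqrt_le_sqrt h3
  have hnorm_of_sq : ∀ (w : EuclideanSpace ℝ (Fin p)) (c : ℝ), ‖w‖^2 ≤ c → ‖w‖ ≤ Real.sqrt c := by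
    intro w c hc
    calc ‖w‖ = Real.sqrt (‖w‖^2) := (Real.sqrt_sq (norm_nonneg _)).symm
      _ ≤ Real.sqrt c := Real.sqrt_le_sqrt hc
  have hbv : ∀ t, 0 ≤ t → ‖vhat t - a‖ ≤ Real.sqrt (2*(V 0)) :=
    fun t ht => hnorm_of_sq _ _ (hquads t ht).2.1
  have hbw : ∀ t, 0 ≤ t → ‖vbar t - a‖ ≤ Real.sqrt (2*(V 0)) :=
    fun t ht => hnorm_of_sq _ _ (hquads t ht).2.2.1
  have hbe : ∀ t, 0 ≤ t → ‖ahat t - vhat t‖ ≤ Real.sqrt (3*(V 0)) :=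
    fun t ht => hnorm_of_sq _ _ (hquads t ht).2.2.2.1
  have hbq : ∀ t, 0 ≤ t → ‖ahat t - abar t‖ ≤ Real.sqrt (3*(V 0)/k) := by
    intro t ht
    apply hnorm_of_sq
    rw [le_div_iff₀ hk0]
    have := (hquads t ht).2.2.2.2
    linarith
  -- ## L∞ conclusions
  have hinfs : InLinf s := ⟨Real.sqrt (2*(V 0)/A), fun t ht => by
    rw [Real.norm_eq_abs]; exact hbs t ht⟩
  have hbvhat : ∀ t, 0 ≤ t → ‖vhat t‖ ≤ Real.sqrt (2*(V 0)) + ‖a‖ := by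
    intro t ht
    calc ‖vhat t‖ = ‖(vhat t - a) + a‖ := by rw [sub_add_cancel]
      _ ≤ ‖vhat t - a‖ + ‖a‖ := norm_add_le _ _
      _ ≤ Real.sqrt (2*(V 0)) + ‖a‖ := by linarith [hbv t ht]
  have hinfv : InLinf vhat := ⟨Real.sqrt (2*(V 0)) + ‖a‖, hbvhat⟩
  have hinfw : InLinf vbar := ⟨Real.sqrt (2*(V 0)) + ‖a‖, fun t ht => by
    calc ‖vbar t‖ = ‖(vbar t - a) + a‖ := by rw [sub_add_cancel]
      _ ≤ ‖vbar t - a‖ + ‖a‖ := norm_add_le _ _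
      _ ≤ Real.sqrt (2*(V 0)) + ‖a‖ := by linarith [hbw t ht]⟩
  have hbahat : ∀ t, 0 ≤ t → ‖ahat t‖ ≤ Real.sqrt (3*(V 0)) + (Real.sqrt (2*(V 0)) + ‖a‖) := by
    intro t ht
    calc ‖ahat t‖ = ‖(ahat t - vhat t) + vhat t‖ := by rw [sub_add_cancel]
      _ ≤ ‖ahat t - vhat t‖ + ‖vhat t‖ := norm_add_le _ _
      _ ≤ Real.sqrt (3*(V 0)) + (Real.sqrt (2*(V 0)) + ‖a‖) := by
          linarith [hbe t ht, hbvhat t ht]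
  have hinfa : InLinf ahat := ⟨Real.sqrt (3*(V 0)) + (Real.sqrt (2*(V 0)) + ‖a‖), hbahat⟩
  have hinfab : InLinf abar := ⟨Real.sqrt (3*(V 0)/k) + (Real.sqrt (3*(V 0))
      + (Real.sqrt (2*(V 0)) + ‖a‖)), fun t ht => by
    have h1 : abar t = ahat t - (ahat t - abar t) := by abel
    calc ‖abar t‖ = ‖ahat t - (ahat t - abar t)‖ := by rw [← h1]
      _ ≤ ‖ahat t‖ + ‖ahat t - abar t‖ := norm_sub_le _ _
      _ ≤ _ := by linarith [hbq t ht, hbahat t ht]⟩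
  have hinfx : InLinf x := hsx hinfs
  -- ## f̃ bounded
  have hinfx2 := hinfx
  obtain ⟨Cx, hCx⟩ := hinfx2
  obtain ⟨M, hM⟩ := hfloc (max Cx (Real.sqrt (3*(V 0)) + (Real.sqrt (2*(V 0)) + ‖a‖)))
  have hbF : ∀ t, 0 ≤ t → |f (x t) (ahat t) t - f (x t) a t| ≤ M := by
    intro t ht
    exact hM (x t) (ahat t) t ht (le_trans (hCx t ht) (le_max_left _ _))
      (le_trans (hbahat t ht) (le_max_right _ _))
  have hM0 : 0 ≤ M := le_trans (abs_nonneg _) (hbF 0 le_rfl)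
  have hinfF : InLinf (fun t => f (x t) (ahat t) t - f (x t) a t) := ⟨M, fun t ht => by
    rw [Real.norm_eq_abs]; exact hbF t ht⟩
  -- ## L² conclusions
  have hIntD : (∫⁻ t in Set.Ici (0:ℝ), ENNReal.ofReal (-Vd t)) ≤ ENNReal.ofReal (V 0) :=
    lintegral_neg_deriv_le' hVd hVdneg hVpos
  have hcomp : ∀ t, 0 ≤ t →
      (A*η/2)*(s t)^2 + (γ/(100*D₁))*(f (x t) (ahat t) t - f (x t) a t)^2
      + (ρ/50)*‖vbar t - vhat t‖^2 + (13/882)*β*‖ahat t - vhat t‖^2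
      + (2/675)*β*‖ahat t - abar t‖^2 ≤ -Vd t := by
    intro t ht
    have := hWb t ht
    linarith
  have hns : ∀ t : ℝ, 0 ≤ t → 0 ≤ (A*η/2)*(s t)^2 := fun t _ => by positivity
  have hnf : ∀ t : ℝ, 0 ≤ t →
      0 ≤ (γ/(100*D₁))*(f (x t) (ahat t) t - f (x t) a t)^2 := fun t _ => by positivity
  have hnd : ∀ t : ℝ, 0 ≤ t → 0 ≤ (ρ/50)*‖vbar t - vhat t‖^2 := fun t _ => by positivity
  have hne : ∀ t : ℝ, 0 ≤ t → 0 ≤ (13/882)*β*‖ahat t - vhat t‖^2 := fun t _ => by positivity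
  have hnq : ∀ t : ℝ, 0 ≤ t → 0 ≤ (2/675)*β*‖ahat t - abar t‖^2 := fun t _ => by positivity
  have hL2s' : (∫⁻ t in Set.Ici (0:ℝ), ENNReal.ofReal ((s t)^2)) < ⊤ := by
    apply inL2_of_pointwise' (c := A*η/2) (Vd := Vd)
      (by positivity) _ hIntD
    intro t ht
    refine le_trans ?_ (hcomp t ht)
    linarith [hnf t ht, hnd t ht, hne t ht, hnq t ht]
  have hL2s : InL2 s := by
    show (∫⁻ t in Set.Ici (0:ℝ), ENNReal.ofReal (‖s t‖^2)) < ⊤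
    have heq : ∀ t : ℝ, ENNReal.ofReal (‖s t‖^2) = ENNReal.ofReal ((s t)^2) := by
      intro t; rw [Real.norm_eq_abs, sq_abs]
    rw [lintegral_congr fun t => heq t]
    exact hL2s'
  have hL2F : InL2 (fun t => f (x t) (ahat t) t - f (x t) a t) := by
    show (∫⁻ t in Set.Ici (0:ℝ),
      ENNReal.ofReal (‖f (x t) (ahat t) t - f (x t) a t‖^2)) < ⊤
    have heq : ∀ t : ℝ, ENNReal.ofReal (‖f (x t) (ahat t) t - f (x t) a t‖^2)
        = ENNReal.ofReal ((f (x t) (ahat t) t - f (x t) a t)^2) := by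
      intro t; rw [Real.norm_eq_abs, sq_abs]
    rw [lintegral_congr fun t => heq t]
    apply inL2_of_pointwise' (c := γ/(100*D₁)) (Vd := Vd) (by positivity) _ hIntD
    intro t ht
    have := hcomp t ht
    linarith [hns t ht, hnd t ht, hne t ht, hnq t ht]
  have hL2D : InL2 (fun t => vhat t - vbar t) := by
    show (∫⁻ t in Set.Ici (0:ℝ), ENNReal.ofReal (‖vhat t - vbar t‖^2)) < ⊤
    have heq : ∀ t : ℝ, ENNReal.ofReal (‖vhat t - vbar t‖^2)
        = ENNReal.ofReal (‖vbar t - vhat t‖^2) := by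
      intro t; rw [norm_sub_rev]
    rw [lintegral_congr fun t => heq t]
    apply inL2_of_pointwise' (c := ρ/50) (Vd := Vd) (g := fun t => ‖vbar t - vhat t‖)
      (by positivity) _ hIntD
    intro t ht
    refine le_trans ?_ (hcomp t ht)
    linarith [hns t ht, hnf t ht, hne t ht, hnq t ht]
  have hL2q : InL2 (fun t => ahat t - abar t) := by
    show (∫⁻ t in Set.Ici (0:ℝ), ENNReal.ofReal (‖ahat t - abar t‖^2)) < ⊤
    apply inL2_of_pointwise' (c := (2/675)*β) (Vd := Vd) (g := fun t => ‖ahat t - abar t‖)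
      (by positivity) _ hIntD
    intro t ht
    refine le_trans ?_ (hcomp t ht)
    linarith [hns t ht, hnf t ht, hnd t ht, hne t ht]
  have hL2e : InL2 (fun t => vhat t - ahat t) := by
    show (∫⁻ t in Set.Ici (0:ℝ), ENNReal.ofReal (‖vhat t - ahat t‖^2)) < ⊤
    have heq : ∀ t : ℝ, ENNReal.ofReal (‖vhat t - ahat t‖^2)
        = ENNReal.ofReal (‖ahat t - vhat t‖^2) := by
      intro t; rw [norm_sub_rev]
    rw [lintegral_congr fun t => heq t]
    apply inL2_of_pointwise' (c := (13/882)*β) (Vd := Vd) (g := fun t => ‖ahat t - vhat t‖)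
      (by positivity) _ hIntD
    intro t ht
    refine le_trans ?_ (hcomp t ht)
    linarith [hns t ht, hnf t ht, hnd t ht, hnq t ht]
  -- ## convergence of s
  have hsqrt0 : 0 ≤ Real.sqrt (2*(V 0)/A) := Real.sqrt_nonneg _
  set L : ℝ := η * Real.sqrt (2*(V 0)/A) + M + 1 with hLdef
  have hL0 : 0 < L := by
    rw [hLdef]
    have : 0 ≤ η * Real.sqrt (2*(V 0)/A) := mul_nonneg hη.le hsqrt0
    linarith
  have hlip : ∀ u v : ℝ, 0 ≤ u → 0 ≤ v → |s u - s v| ≤ L * |u - v| := by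
    intro u v hu hv'
    have hbdd : ∀ τ ∈ Set.Ici (0:ℝ),
        ‖-η * s τ + (f (x τ) (ahat τ) τ - f (x τ) a τ)‖ ≤ L := by
      intro τ hτ
      rw [Real.norm_eq_abs]
      calc |(-η) * s τ + (f (x τ) (ahat τ) τ - f (x τ) a τ)|
          ≤ |(-η) * s τ| + |f (x τ) (ahat τ) τ - f (x τ) a τ| := abs_add_le _ _
        _ = η * |s τ| + |f (x τ) (ahat τ) τ - f (x τ) a τ| := by
            rw [abs_mul, abs_neg, abs_of_pos hη]
        _ ≤ η * Real.sqrt (2*(V 0)/A) + M := by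
            have h1 := mul_le_mul_of_nonneg_left (hbs τ hτ) hη.le
            have h2 := hbF τ hτ
            linarith
        _ ≤ L := by rw [hLdef]; linarith
    have := (convex_Ici (0:ℝ)).norm_image_sub_le_of_norm_hasDerivWithin_le
      (f := s) (f' := fun τ => -η * s τ + (f (x τ) (ahat τ) τ - f (x τ) a τ))
      (C := L) (fun τ hτ => (hs τ hτ).hasDerivWithinAt) hbdd hv' hu
    simpa [Real.norm_eq_abs] using this
  have hlim : Tendsto s atTop (nhds 0) := tendsto_zero_of_sq_integrable' hL0 hlip hL2s'
  exact ⟨hinfx, hinfv, hinfw, hinfa, hinfab, ⟨hL2F, hinfF⟩, ⟨hL2s, hinfs⟩,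
    hL2D, hL2q, hL2e, hlim, hxd hlim⟩

end
end

section
/- Consider the linearly parameterized error dynamics ṡ = −η s + Y(t)(â − a) with η > 0, together with the composite adaptation law with bounded-gain-forgetting learning rate: â̇ = −P(t) Y(t)ᵀ(s + Y(t)(â − a)), where P(t) is a symmetric positive definite matrix-valued signal satisfying (d/dt) P(t)⁻¹ = −λ(t) P(t)⁻¹ + Y(t)ᵀY(t) with forgetting factor λ(t) = λ₀(1 − ‖P(t)‖/P₀) ≥ 0, λ₀ > 0, P₀ > 0, which keeps ‖P(t)‖ ≤ P₀. Then all trajectories (x, â) remain bounded, f̃ = Y(â − a) ∈ L² ∩ L∞, s ∈ L² ∩ L∞, s(t) → 0 as t → ∞, and x(t) → x_d(t). -/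
open MeasureTheory Filter
open scoped RealInnerProductSpace ENNReal

noncomputable section

/-- The rank-one operator `v vᵀ` on Euclidean space, `w ↦ ⟪v, w⟫ v`. -/
def rankOne {p : ℕ} (v : EuclideanSpace ℝ (Fin p)) :
    EuclideanSpace ℝ (Fin p) →L[ℝ] EuclideanSpace ℝ (Fin p) :=
  (innerSL ℝ v).smulRight v

section Aux

variable {E : Type*} [NormedAddCommGroup E] [InnerProductSpace ℝ E]

lemma psd_cs (T : E →L[ℝ] E) (hsym : ∀ v w : E, ⟪T v, w⟫ = ⟪v, T w⟫)
    (hpos : ∀ v : E, 0 ≤ ⟪v, T v⟫) (u v : E) :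
    ⟪u, T v⟫ ^ 2 ≤ ⟪u, T u⟫ * ⟪v, T v⟫ := by
  have hptw : ∀ c : ℝ, 0 ≤ ⟪v, T v⟫ * (c * c) + (2 * ⟪u, T v⟫) * c + ⟪u, T u⟫ := by
    intro c
    have h := hpos (u + c • v)
    have hvu : ⟪v, T u⟫ = ⟪u, T v⟫ := by
      rw [← hsym v u, real_inner_comm]
    simp only [map_add, ContinuousLinearMap.map_smul, inner_add_left, inner_add_right,
      real_inner_smul_left, real_inner_smul_right, hvu] at h
    nlinarith [h]
  have hd := discrim_le_zero hptw
  rw [discrim] at hd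
  nlinarith [hd]

lemma psd_norm_sq_le (T : E →L[ℝ] E) (hsym : ∀ v w : E, ⟪T v, w⟫ = ⟪v, T w⟫)
    (hpos : ∀ v : E, 0 ≤ ⟪v, T v⟫) (w : E) :
    ‖T w‖ ^ 2 ≤ ‖T‖ * ⟪w, T w⟫ := by
  have h1 : ⟪w, T (T w)⟫ = ‖T w‖ ^ 2 := by
    rw [← hsym, real_inner_self_eq_norm_sq]
  have h2 := psd_cs T hsym hpos w (T w)
  rw [h1] at h2
  have h3 : ⟪T w, T (T w)⟫ ≤ ‖T w‖ * (‖T‖ * ‖T w‖) := by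
    calc ⟪T w, T (T w)⟫ ≤ ‖T w‖ * ‖T (T w)‖ := real_inner_le_norm _ _
    _ ≤ ‖T w‖ * (‖T‖ * ‖T w‖) := by
        exact mul_le_mul_of_nonneg_left (T.le_opNorm _) (norm_nonneg _)
  rcases eq_or_lt_of_le (norm_nonneg (T w)) with hn | hn
  · rw [← hn]
    simpa using mul_nonneg (norm_nonneg T) (hpos w)
  · nlinarith [mul_le_mul_of_nonneg_left h3 (hpos w), mul_pos hn hn, hpos w, norm_nonneg T]

lemma lintegral_Ici_le_of_Icc (F : ℝ → ℝ≥0∞) (C : ℝ≥0∞)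
    (hm : AEMeasurable F (volume.restrict (Set.Ici (0:ℝ))))
    (h : ∀ nn : ℕ, ∫⁻ t in Set.Icc (0:ℝ) nn, F t ≤ C) :
    ∫⁻ t in Set.Ici (0:ℝ), F t ≤ C := by
  set ν := volume.restrict (Set.Ici (0:ℝ)) with hν
  set f : ℕ → ℝ → ℝ≥0∞ := fun k => (Set.Icc (0:ℝ) k).indicator F with hf
  have hmn : ∀ k, AEMeasurable (f k) ν := fun k => hm.indicator measurableSet_Icc
  have hmono : ∀ t, Monotone fun k => f k t := by
    intro t k m hkm
    exact Set.indicator_le_indicator_of_subset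
      (Set.Icc_subset_Icc_right (by exact_mod_cast hkm)) (fun _ => zero_le) t
  have key : ∫⁻ t, ⨆ k, f k t ∂ν = ⨆ k, ∫⁻ t, f k t ∂ν :=
    lintegral_iSup' hmn (Filter.Eventually.of_forall hmono)
  have hfn : ∀ k : ℕ, ∫⁻ t, f k t ∂ν = ∫⁻ t in Set.Icc (0:ℝ) k, F t := by
    intro k
    show ∫⁻ t, (Set.Icc (0:ℝ) k).indicator F t ∂ν = _
    rw [lintegral_indicator measurableSet_Icc, hν,
      Measure.restrict_restrict measurableSet_Icc,
      Set.inter_eq_self_of_subset_left (Set.Icc_subset_Ici_self)]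
  have hsup : ∀ᵐ t ∂ν, (⨆ k, f k t) = F t := by
    filter_upwards [ae_restrict_mem measurableSet_Ici] with t ht
    refine le_antisymm (iSup_le fun k => Set.indicator_le_self _ _ t) ?_
    refine le_iSup_of_le ⌈t⌉₊ ?_
    rw [hf]
    simp only
    rw [Set.indicator_of_mem (Set.mem_Icc.mpr ⟨ht, Nat.le_ceil t⟩)]
  calc ∫⁻ t in Set.Ici (0:ℝ), F t = ∫⁻ t, ⨆ k, f k t ∂ν := (lintegral_congr_ae hsup).symm
    _ = ⨆ k, ∫⁻ t, f k t ∂ν := key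
    _ ≤ C := iSup_le fun k => (hfn k) ▸ h k

lemma tendsto_zero_of_lipschitz_sq_integrable (s : ℝ → ℝ) (K : ℝ) (hK : 0 < K)
    (hlip : ∀ a b : ℝ, 0 ≤ a → 0 ≤ b → |s a - s b| ≤ K * |a - b|)
    (hL2 : ∫⁻ t in Set.Ici (0:ℝ), ENNReal.ofReal (s t ^ 2) ≠ ⊤) :
    Tendsto s atTop (nhds 0) := by
  rw [Metric.tendsto_atTop]
  by_contra hcon
  push_neg at hcon
  obtain ⟨ε, hε, hfreq⟩ := hcon
  simp only [Real.dist_0_eq_abs] at hfreq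
  choose c hc1 hc2 using hfreq
  set δ := ε / (2 * K) with hδ
  have hδpos : 0 < δ := by positivity
  have hKδ : K * δ = ε / 2 := by
    rw [hδ]; field_simp
  let t : ℕ → ℝ := fun k => Nat.rec (c 0) (fun _ prev => c (prev + 2 * δ)) k
  have ht0 : ∀ k, t (k + 1) = c (t k + 2 * δ) := fun k => rfl
  have hge : ∀ k, t k + 2 * δ ≤ t (k + 1) := fun k => by rw [ht0]; exact hc1 _
  have hpos : ∀ k, 0 ≤ t k := by
    intro k
    induction k with
    | zero => exact hc1 0
    | succ k ih => linarith [hge k]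
  have hsk : ∀ k, ε ≤ |s (t k)| := by
    intro k
    cases k with
    | zero => exact hc2 0
    | succ k => rw [ht0]; exact hc2 _
  have hmonot : StrictMono t :=
    strictMono_nat_of_lt_succ (fun k => lt_of_lt_of_le (by linarith [hδpos]) (hge k))
  have hsep : ∀ k m, k < m → t k + δ < t m := by
    intro k m hkm
    have h1 : t (k + 1) ≤ t m := hmonot.monotone hkm
    linarith [hge k]
  have hintbd : ∀ k, ∀ τ ∈ Set.Icc (t k) (t k + δ), ε / 2 ≤ |s τ| := by
    intro k τ hτ
    have hτ0 : 0 ≤ τ := le_trans (hpos k) hτ.1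
    have h1 := hlip (t k) τ (hpos k) hτ0
    have h2 : |t k - τ| ≤ δ := by
      rw [abs_sub_comm, abs_of_nonneg (by linarith [hτ.1])]
      linarith [hτ.2]
    have h3 : K * |t k - τ| ≤ ε / 2 := by
      calc K * |t k - τ| ≤ K * δ := by nlinarith
        _ = ε / 2 := hKδ
    have h4 := abs_sub_abs_le_abs_sub (s (t k)) (s τ)
    linarith [hsk k]
  set U := ⋃ k, Set.Icc (t k) (t k + δ) with hU
  have hUmeas : MeasurableSet U := MeasurableSet.iUnion (fun k => measurableSet_Icc)
  have hdisj : Pairwise (Function.onFun Disjoint fun k => Set.Icc (t k) (t k + δ)) := by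
    have aux : ∀ i j, i < j → Disjoint (Set.Icc (t i) (t i + δ)) (Set.Icc (t j) (t j + δ)) := by
      intro i j hij
      rw [Set.disjoint_left]
      rintro τ ⟨_, h2⟩ ⟨h3, _⟩
      linarith [hsep i j hij]
    intro i j hij
    rcases hij.lt_or_gt with h | h
    · exact aux i j h
    · exact (aux j i h).symm
  have hUvol : volume U = ⊤ := by
    rw [hU, measure_iUnion hdisj (fun k => measurableSet_Icc)]
    have : ∀ k : ℕ, volume (Set.Icc (t k) (t k + δ)) = ENNReal.ofReal δ := by
      intro k; rw [Real.volume_Icc]; congr 1; ring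
    simp only [this]
    exact ENNReal.tsum_const_eq_top_of_ne_zero (ENNReal.ofReal_pos.mpr hδpos).ne'
  have hUsub : U ⊆ Set.Ici (0:ℝ) :=
    Set.iUnion_subset fun k τ hτ => le_trans (hpos k) hτ.1
  have hlow : ∫⁻ τ in U, ENNReal.ofReal (ε ^ 2 / 4) ≤ ∫⁻ τ in U, ENNReal.ofReal (s τ ^ 2) := by
    refine lintegral_mono_ae ?_
    filter_upwards [ae_restrict_mem hUmeas] with τ hτ
    obtain ⟨k, hk⟩ := Set.mem_iUnion.1 hτ
    have := hintbd k τ hk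
    exact ENNReal.ofReal_le_ofReal (by nlinarith [sq_abs (s τ)])
  rw [setLIntegral_const] at hlow
  rw [hUvol, ENNReal.mul_top (by positivity)] at hlow
  have : (⊤ : ℝ≥0∞) ≤ ∫⁻ t in Set.Ici (0:ℝ), ENNReal.ofReal (s t ^ 2) :=
    le_trans hlow (lintegral_mono_set hUsub)
  exact hL2 (top_le_iff.1 this)

end Aux

set_option maxHeartbeats 1600000 in
/-- composite adaptation with bounded-gain-forgetting learning rate. -/
theorem bgf_composite_adaptation_linear
    {n p : ℕ}
    (x xd : ℝ → EuclideanSpace ℝ (Fin n))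
    (s : ℝ → ℝ)
    (Y : ℝ → EuclideanSpace ℝ (Fin p))
    (a : EuclideanSpace ℝ (Fin p))
    (ahat : ℝ → EuclideanSpace ℝ (Fin p))
    (P Q : ℝ → (EuclideanSpace ℝ (Fin p) →L[ℝ] EuclideanSpace ℝ (Fin p)))
    (η lam₀ P₀ : ℝ)
    (hη : 0 < η) (hlam₀ : 0 < lam₀) (hP₀ : 0 < P₀)
    -- P(t) is symmetric positive definite
    (hPsym : ∀ t, 0 ≤ t → ∀ v w : EuclideanSpace ℝ (Fin p), ⟪P t v, w⟫ = ⟪v, P t w⟫)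
    (hPpos : ∀ t, 0 ≤ t → ∀ v : EuclideanSpace ℝ (Fin p), v ≠ 0 → 0 < ⟪v, P t v⟫)
    -- Q(t) = P(t)⁻¹
    (hPQ : ∀ t, 0 ≤ t →
      (P t).comp (Q t) = ContinuousLinearMap.id ℝ (EuclideanSpace ℝ (Fin p)) ∧
      (Q t).comp (P t) = ContinuousLinearMap.id ℝ (EuclideanSpace ℝ (Fin p)))
    -- the forgetting factor keeps ‖P(t)‖ ≤ P₀ (so that λ(t) ≥ 0)
    (hPbd : ∀ t, 0 ≤ t → ‖P t‖ ≤ P₀)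
    -- bounded-gain-forgetting dynamics (d/dt) P⁻¹ = -λ(t) P⁻¹ + YᵀY,
    -- λ(t) = λ₀ (1 - ‖P(t)‖/P₀)
    (hQdyn : ∀ t, 0 ≤ t →
      HasDerivAt Q ((-(lam₀ * (1 - ‖P t‖ / P₀))) • Q t + rankOne (Y t)) t)
    -- error dynamics ṡ = -η s + Y (â - a)
    (hs : ∀ t, 0 ≤ t → HasDerivAt s (-η * s t + ⟪Y t, ahat t - a⟫) t)
    -- composite adaptation law â̇ = -P(t) Yᵀ (s + Y(â - a))
    (ha : ∀ t, 0 ≤ t →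
      HasDerivAt ahat (-(P t ((s t + ⟪Y t, ahat t - a⟫) • Y t))) t)
    -- the regressor Y(x, t) is locally bounded in x uniformly in t
    (hYloc : ∀ R : ℝ, ∃ M : ℝ, ∀ t, 0 ≤ t → ‖x t‖ ≤ R → ‖Y t‖ ≤ M)
    -- boundedness of s implies boundedness of x
    (hsx : InLinf s → InLinf x)
    -- s → 0 implies x → x_d
    (hxd : Tendsto s atTop (nhds 0) →
      Tendsto (fun t => x t - xd t) atTop (nhds 0)) :
    InLinf x ∧ InLinf ahat ∧
    (InL2 (fun t => ⟪Y t, ahat t - a⟫) ∧ InLinf (fun t => ⟪Y t, ahat t - a⟫)) ∧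
    (InL2 s ∧ InLinf s) ∧
    Tendsto s atTop (nhds 0) ∧
    Tendsto (fun t => x t - xd t) atTop (nhds 0) := by
    classical
  set b : ℝ → EuclideanSpace ℝ (Fin p) := fun t => ahat t - a with hbdef
  set ft : ℝ → ℝ := fun t => ⟪Y t, ahat t - a⟫ with hftdef
  set q : ℝ → ℝ := fun t => ⟪b t, Q t (b t)⟫ with hqdef
  set lam : ℝ → ℝ := fun t => lam₀ * (1 - ‖P t‖ / P₀) with hlamdef
  set V : ℝ → ℝ := fun t => s t ^ 2 + q t with hVdef
  set D : ℝ → ℝ := fun t => 2 * η * s t ^ 2 + ft t ^ 2 + lam t * q t with hDdef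
  have hPQ_app : ∀ t, 0 ≤ t → ∀ v, P t (Q t v) = v := by
    intro t ht v
    have h := congrArg
      (fun L : EuclideanSpace ℝ (Fin p) →L[ℝ] EuclideanSpace ℝ (Fin p) => L v) (hPQ t ht).1
    simpa using h
  have hQP_app : ∀ t, 0 ≤ t → ∀ v, Q t (P t v) = v := by
    intro t ht v
    have h := congrArg
      (fun L : EuclideanSpace ℝ (Fin p) →L[ℝ] EuclideanSpace ℝ (Fin p) => L v) (hPQ t ht).2
    simpa using h
  have hPpos' : ∀ t, 0 ≤ t → ∀ v, 0 ≤ ⟪v, P t v⟫ := by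
    intro t ht v
    by_cases hv : v = 0
    · simp [hv]
    · exact (hPpos t ht v hv).le
  have hQpos : ∀ t, 0 ≤ t → ∀ v, 0 ≤ ⟪v, Q t v⟫ := by
    intro t ht v
    calc (0:ℝ) ≤ ⟪Q t v, P t (Q t v)⟫ := hPpos' t ht _
      _ = ⟪P t (Q t v), Q t v⟫ := real_inner_comm _ _
      _ = ⟪v, Q t v⟫ := by rw [hPQ_app t ht v]
  have hq_nonneg : ∀ t, 0 ≤ t → 0 ≤ q t := fun t ht => hQpos t ht (b t)
  have hlam_nonneg : ∀ t, 0 ≤ t → 0 ≤ lam t := by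
    intro t ht
    have h1 : ‖P t‖ / P₀ ≤ 1 := (div_le_one hP₀).mpr (hPbd t ht)
    simp only [hlamdef]
    nlinarith
  have hlam_le : ∀ t : ℝ, lam t ≤ lam₀ := by
    intro t
    have h1 : 0 ≤ ‖P t‖ / P₀ := div_nonneg (norm_nonneg _) hP₀.le
    simp only [hlamdef]
    nlinarith
  have hrank : ∀ (v w : EuclideanSpace ℝ (Fin p)), rankOne v w = ⟪v, w⟫ • v := by
    intro v w
    simp [rankOne]
  have hbderiv : ∀ t, 0 ≤ t → HasDerivAt b (-(P t ((s t + ft t) • Y t))) t := by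
    intro t ht
    simp only [hbdef, hftdef]
    exact (ha t ht).sub_const a
  have hqderiv : ∀ t, 0 ≤ t → HasDerivAt q
      (⟪b t, ((-(lam t)) • Q t + rankOne (Y t)) (b t) + Q t (-(P t ((s t + ft t) • Y t)))⟫
        + ⟪-(P t ((s t + ft t) • Y t)), Q t (b t)⟫) t := by
    intro t ht
    have hQ' : HasDerivAt Q ((-(lam t)) • Q t + rankOne (Y t)) t := hQdyn t ht
    have hQb := hQ'.clm_apply (hbderiv t ht)
    have h := HasDerivAt.inner ℝ (hbderiv t ht) hQb
    simp only [hqdef]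
    exact h
  have hVderiv : ∀ t, 0 ≤ t → HasDerivAt V (-D t) t := by
    intro t ht
    have h1 := (hs t ht).pow 2
    have hsum := h1.add (hqderiv t ht)
    have hV : HasDerivAt V ((2:ℕ) * s t ^ (2-1) * (-η * s t + ⟪Y t, ahat t - a⟫)
        + (⟪b t, ((-(lam t)) • Q t + rankOne (Y t)) (b t) + Q t (-(P t ((s t + ft t) • Y t)))⟫
          + ⟪-(P t ((s t + ft t) • Y t)), Q t (b t)⟫)) t := by
      simp only [hVdef]
      exact hsum
    convert hV using 1
    have e0 : ∀ v, Q t (P t v) = v := hQP_app t ht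
    have e1 : ∀ v, P t (Q t v) = v := hPQ_app t ht
    simp only [hDdef, hftdef, hqdef, hlamdef, hbdef, ContinuousLinearMap.add_apply,
      ContinuousLinearMap.coe_smul', Pi.smul_apply, map_neg, inner_neg_left, inner_neg_right,
      hrank, e0, e1, hPsym t ht, inner_add_right, real_inner_smul_right,
      real_inner_smul_left, real_inner_comm (ahat t - a) (Y t)]
    push_cast
    ring
  have hD_nonneg : ∀ t, 0 ≤ t → 0 ≤ D t := by
    intro t ht
    have h1 := mul_nonneg (hlam_nonneg t ht) (hq_nonneg t ht)
    have h2 : 0 ≤ 2 * η * s t ^ 2 := by positivity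
    simp only [hDdef]
    nlinarith [sq_nonneg (ft t)]
  have hVanti : AntitoneOn V (Set.Ici (0:ℝ)) := by
    refine antitoneOn_of_deriv_nonpos (convex_Ici 0)
      (fun τ hτ => ((hVderiv τ hτ).continuousAt).continuousWithinAt) ?_ ?_
    · intro τ hτ
      rw [interior_Ici] at hτ
      exact ((hVderiv τ (le_of_lt hτ)).differentiableAt).differentiableWithinAt
    · intro τ hτ
      rw [interior_Ici] at hτ
      rw [(hVderiv τ (le_of_lt hτ)).deriv]
      linarith [hD_nonneg τ (le_of_lt hτ)]
  have hVle : ∀ t, 0 ≤ t → V t ≤ V 0 := fun t ht => hVanti Set.self_mem_Ici ht ht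
  have hs_sq : ∀ t, 0 ≤ t → s t ^ 2 ≤ V 0 := by
    intro t ht
    have h1 := hVle t ht
    have h2 := hq_nonneg t ht
    simp only [hVdef] at h1 ⊢
    have h3 := hq_nonneg 0 le_rfl
    nlinarith [sq_nonneg (s 0)]
  have hq_le : ∀ t, 0 ≤ t → q t ≤ V 0 := by
    intro t ht
    have h1 := hVle t ht
    simp only [hVdef] at h1 ⊢
    nlinarith [sq_nonneg (s t)]
  have hV0 : 0 ≤ V 0 := by
    simp only [hVdef]
    have := hq_nonneg 0 le_rfl
    nlinarith [sq_nonneg (s 0)]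
  set Cs := Real.sqrt (V 0) with hCsdef
  have hCs0 : 0 ≤ Cs := Real.sqrt_nonneg _
  have hsbd : ∀ t, 0 ≤ t → |s t| ≤ Cs := fun t ht => Real.abs_le_sqrt (hs_sq t ht)
  have hsinf : InLinf s := ⟨Cs, fun t ht => by rw [Real.norm_eq_abs]; exact hsbd t ht⟩
  have hxinf : InLinf x := hsx hsinf
  obtain ⟨Cx, hCx⟩ := hxinf
  obtain ⟨M, hM⟩ := hYloc Cx
  have hM' : ∀ t, 0 ≤ t → ‖Y t‖ ≤ M := fun t ht => hM t ht (hCx t ht)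
  have hM0 : 0 ≤ M := le_trans (norm_nonneg _) (hM' 0 le_rfl)
  have hb_sq : ∀ t, 0 ≤ t → ‖b t‖ ^ 2 ≤ P₀ * V 0 := by
    intro t ht
    have h1 : ‖P t (Q t (b t))‖ ^ 2 ≤ ‖P t‖ * ⟪Q t (b t), P t (Q t (b t))⟫ :=
      psd_norm_sq_le (P t) (hPsym t ht) (hPpos' t ht) (Q t (b t))
    rw [hPQ_app t ht (b t)] at h1
    have h2 : ⟪Q t (b t), b t⟫ = q t := by
      rw [real_inner_comm]
    rw [h2] at h1
    have h3 : ‖P t‖ * q t ≤ P₀ * V 0 :=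
      mul_le_mul (hPbd t ht) (hq_le t ht) (hq_nonneg t ht) hP₀.le
    linarith
  set Cb := Real.sqrt (P₀ * V 0) with hCbdef
  have hCb0 : 0 ≤ Cb := Real.sqrt_nonneg _
  have hbbd : ∀ t, 0 ≤ t → ‖b t‖ ≤ Cb := by
    intro t ht
    have h := Real.abs_le_sqrt (hb_sq t ht)
    rwa [abs_norm] at h
  have hainf : InLinf ahat := by
    refine ⟨Cb + ‖a‖, fun t ht => ?_⟩
    have h1 : ahat t = b t + a := by simp [hbdef]
    rw [h1]
    exact le_trans (norm_add_le _ _) (by linarith [hbbd t ht])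
  set Mf := M * Cb with hMfdef
  have hMf0 : 0 ≤ Mf := mul_nonneg hM0 hCb0
  have hftbd : ∀ t, 0 ≤ t → |ft t| ≤ Mf := by
    intro t ht
    have h1 : |ft t| ≤ ‖Y t‖ * ‖b t‖ := by
      simp only [hftdef, hbdef]
      exact abs_real_inner_le_norm _ _
    have h2 := mul_le_mul (hM' t ht) (hbbd t ht) (norm_nonneg _) hM0
    simp only [hMfdef]
    linarith
  have hftinf : InLinf (fun t => ⟪Y t, ahat t - a⟫) := by
    refine ⟨Mf, fun t ht => ?_⟩
    rw [Real.norm_eq_abs]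
    exact hftbd t ht
  have hscont : ContinuousOn s (Set.Ici (0:ℝ)) :=
    fun τ hτ => ((hs τ hτ).continuousAt).continuousWithinAt
  have hVT0 : ∀ T, 0 ≤ T → 0 ≤ V T := by
    intro T hT
    simp only [hVdef]
    nlinarith [sq_nonneg (s T), hq_nonneg T hT]
  -- integrability of D on [0,T]
  have hderivs : ∀ τ : ℝ, 0 ≤ τ → deriv s τ = -η * s τ + ft τ := by
    intro τ hτ
    simp only [hftdef]
    exact (hs τ hτ).deriv
  have hDii : ∀ T : ℝ, 0 ≤ T → IntervalIntegrable D volume 0 T := by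
    intro T hT
    rw [intervalIntegrable_iff_integrableOn_Icc_of_le hT]
    have hmeasD : AEStronglyMeasurable D (volume.restrict (Set.Icc (0:ℝ) T)) := by
      have h1 : AEStronglyMeasurable (fun τ => -deriv V τ)
          (volume.restrict (Set.Icc (0:ℝ) T)) :=
        ((measurable_deriv V).neg).aestronglyMeasurable
      refine h1.congr ?_
      filter_upwards [ae_restrict_mem measurableSet_Icc] with τ hτ
      rw [(hVderiv τ hτ.1).deriv, neg_neg]
    refine ⟨hmeasD, ?_⟩
    refine HasFiniteIntegral.restrict_of_bounded
      (C := 2 * η * V 0 + Mf ^ 2 + lam₀ * V 0) measure_Icc_lt_top ?_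
    filter_upwards [ae_restrict_mem measurableSet_Icc] with τ hτ
    have hτ0 : (0:ℝ) ≤ τ := hτ.1
    rw [Real.norm_eq_abs, abs_of_nonneg (hD_nonneg τ hτ0)]
    have h1 : s τ ^ 2 ≤ V 0 := hs_sq τ hτ0
    have h2 : ft τ ^ 2 ≤ Mf ^ 2 := by
      calc ft τ ^ 2 = |ft τ| ^ 2 := (sq_abs _).symm
        _ ≤ Mf ^ 2 := pow_le_pow_left₀ (abs_nonneg _) (hftbd τ hτ0) 2
    have h3 : lam τ * q τ ≤ lam₀ * V 0 :=
      mul_le_mul (hlam_le τ) (hq_le τ hτ0) (hq_nonneg τ hτ0) hlam₀.le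
    simp only [hDdef]
    nlinarith [hη.le]
  have hDint_le : ∀ T : ℝ, 0 ≤ T → ∫ τ in (0:ℝ)..T, D τ ≤ V 0 := by
    intro T hT
    have hder : ∀ τ ∈ Set.uIcc (0:ℝ) T, HasDerivAt V (-D τ) τ := by
      intro τ hτ
      rw [Set.uIcc_of_le hT] at hτ
      exact hVderiv τ hτ.1
    have hDneg : IntervalIntegrable (fun τ => -D τ) volume 0 T := (hDii T hT).neg
    have hftc := intervalIntegral.integral_eq_sub_of_hasDerivAt (f' := fun τ => -D τ) hder hDneg
    rw [intervalIntegral.integral_neg] at hftc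
    have := hVT0 T hT
    linarith
  have hg2ii : ∀ T : ℝ, 0 ≤ T → IntervalIntegrable (fun τ => ft τ ^ 2) volume 0 T := by
    intro T hT
    rw [intervalIntegrable_iff_integrableOn_Icc_of_le hT]
    have hsm : AEStronglyMeasurable ft (volume.restrict (Set.Icc (0:ℝ) T)) := by
      have hcs : ContinuousOn s (Set.Icc (0:ℝ) T) :=
        hscont.mono (fun τ hτ => hτ.1)
      have h1 : AEStronglyMeasurable (fun τ => deriv s τ + η * s τ)
          (volume.restrict (Set.Icc (0:ℝ) T)) :=
        (measurable_deriv s).aestronglyMeasurable.add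
          ((hcs.aestronglyMeasurable measurableSet_Icc).const_mul η)
      refine h1.congr ?_
      filter_upwards [ae_restrict_mem measurableSet_Icc] with τ hτ
      rw [hderivs τ hτ.1]
      ring
    have hsm2 : AEStronglyMeasurable (fun τ => ft τ ^ 2) (volume.restrict (Set.Icc (0:ℝ) T)) := by
      refine (hsm.mul hsm).congr (Filter.Eventually.of_forall fun τ => ?_)
      exact (sq (ft τ)).symm
    refine ⟨hsm2, ?_⟩
    refine HasFiniteIntegral.restrict_of_bounded (C := Mf ^ 2) measure_Icc_lt_top ?_
    filter_upwards [ae_restrict_mem measurableSet_Icc] with τ hτ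
    rw [Real.norm_eq_abs, abs_of_nonneg (sq_nonneg _)]
    calc ft τ ^ 2 = |ft τ| ^ 2 := (sq_abs _).symm
      _ ≤ Mf ^ 2 := pow_le_pow_left₀ (abs_nonneg _) (hftbd τ hτ.1) 2
  have hg1ii : ∀ T : ℝ, 0 ≤ T →
      IntervalIntegrable (fun τ => 2 * η * s τ ^ 2) volume 0 T := by
    intro T hT
    refine ContinuousOn.intervalIntegrable ?_
    rw [Set.uIcc_of_le hT]
    exact (continuousOn_const.mul
      ((hscont.mono (fun τ hτ => hτ.1)).pow 2))
  have hsqii : ∀ T : ℝ, 0 ≤ T →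
      IntervalIntegrable (fun τ => s τ ^ 2) volume 0 T := by
    intro T hT
    refine ContinuousOn.intervalIntegrable ?_
    rw [Set.uIcc_of_le hT]
    exact (hscont.mono (fun τ hτ => hτ.1)).pow 2
  have hg1_le : ∀ T : ℝ, 0 ≤ T → ∫ τ in (0:ℝ)..T, s τ ^ 2 ≤ V 0 / (2 * η) := by
    intro T hT
    have hmono := intervalIntegral.integral_mono_on hT (hg1ii T hT) (hDii T hT)
      (fun τ hτ => by
        simp only [hDdef]
        nlinarith [sq_nonneg (ft τ), mul_nonneg (hlam_nonneg τ hτ.1) (hq_nonneg τ hτ.1)])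
    have heq : ∫ τ in (0:ℝ)..T, 2 * η * s τ ^ 2 = 2 * η * ∫ τ in (0:ℝ)..T, s τ ^ 2 :=
      intervalIntegral.integral_const_mul _ _
    have h2η : 0 < 2 * η := by linarith
    rw [heq] at hmono
    have := hDint_le T hT
    rw [le_div_iff₀ h2η]
    nlinarith
  have hg2_le : ∀ T : ℝ, 0 ≤ T → ∫ τ in (0:ℝ)..T, ft τ ^ 2 ≤ V 0 := by
    intro T hT
    have hmono := intervalIntegral.integral_mono_on hT (hg2ii T hT) (hDii T hT)
      (fun τ hτ => by
        simp only [hDdef]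
        nlinarith [sq_nonneg (s τ), mul_nonneg (hlam_nonneg τ hτ.1) (hq_nonneg τ hτ.1), hη.le])
    linarith [hDint_le T hT]
  -- L² of s
  have hsL2' : ∫⁻ t in Set.Ici (0:ℝ), ENNReal.ofReal (s t ^ 2) ≤
      ENNReal.ofReal (V 0 / (2 * η)) := by
    refine lintegral_Ici_le_of_Icc _ _ ?_ ?_
    · exact ENNReal.measurable_ofReal.comp_aemeasurable
        ((hscont.aemeasurable measurableSet_Ici).pow_const 2)
    · intro nn
      have hT : (0:ℝ) ≤ (nn:ℝ) := Nat.cast_nonneg nn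
      have hint : IntegrableOn (fun τ => s τ ^ 2) (Set.Icc (0:ℝ) nn) := by
        rw [← intervalIntegrable_iff_integrableOn_Icc_of_le hT]
        exact hsqii nn hT
      rw [← ofReal_integral_eq_lintegral_ofReal hint
        (Filter.Eventually.of_forall fun τ => sq_nonneg (s τ))]
      apply ENNReal.ofReal_le_ofReal
      rw [integral_Icc_eq_integral_Ioc, ← intervalIntegral.integral_of_le hT]
      exact hg1_le nn hT
  have hsL2 : InL2 s := by
    show (∫⁻ t in Set.Ici (0:ℝ), ENNReal.ofReal (‖s t‖ ^ 2)) < ⊤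
    simp only [Real.norm_eq_abs, sq_abs]
    exact lt_of_le_of_lt hsL2' ENNReal.ofReal_lt_top
  -- L² of ft
  have hftmeasIci : AEMeasurable ft (volume.restrict (Set.Ici (0:ℝ))) := by
    have h1 : AEMeasurable (fun τ => deriv s τ + η * s τ)
        (volume.restrict (Set.Ici (0:ℝ))) :=
      (measurable_deriv s).aemeasurable.add
        ((hscont.aemeasurable measurableSet_Ici).const_mul η)
    refine h1.congr ?_
    filter_upwards [ae_restrict_mem measurableSet_Ici] with τ hτ
    rw [hderivs τ hτ]
    ring
  have hftL2' : ∫⁻ t in Set.Ici (0:ℝ), ENNReal.ofReal (ft t ^ 2) ≤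
      ENNReal.ofReal (V 0) := by
    refine lintegral_Ici_le_of_Icc _ _ ?_ ?_
    · exact ENNReal.measurable_ofReal.comp_aemeasurable (hftmeasIci.pow_const 2)
    · intro nn
      have hT : (0:ℝ) ≤ (nn:ℝ) := Nat.cast_nonneg nn
      have hint : IntegrableOn (fun τ => ft τ ^ 2) (Set.Icc (0:ℝ) nn) := by
        rw [← intervalIntegrable_iff_integrableOn_Icc_of_le hT]
        exact hg2ii nn hT
      rw [← ofReal_integral_eq_lintegral_ofReal hint
        (Filter.Eventually.of_forall fun τ => sq_nonneg (ft τ))]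
      apply ENNReal.ofReal_le_ofReal
      rw [integral_Icc_eq_integral_Ioc, ← intervalIntegral.integral_of_le hT]
      exact hg2_le nn hT
  have hftL2 : InL2 (fun t => ⟪Y t, ahat t - a⟫) := by
    show (∫⁻ t in Set.Ici (0:ℝ), ENNReal.ofReal (‖(⟪Y t, ahat t - a⟫ : ℝ)‖ ^ 2)) < ⊤
    simp only [Real.norm_eq_abs, sq_abs]
    have : ∀ t : ℝ, (⟪Y t, ahat t - a⟫ : ℝ) = ft t := fun t => rfl
    simp only [this]
    exact lt_of_le_of_lt hftL2' ENNReal.ofReal_lt_top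
  -- Barbalat
  set K := η * Cs + Mf + 1 with hKdef
  have hKpos : 0 < K := by
    have h1 : 0 ≤ η * Cs := mul_nonneg hη.le hCs0
    simp only [hKdef]
    linarith
  have hlip : ∀ u v : ℝ, 0 ≤ u → 0 ≤ v → |s u - s v| ≤ K * |u - v| := by
    intro u v hu hv
    have hbound : ∀ τ ∈ Set.Ici (0:ℝ), ‖-η * s τ + ft τ‖ ≤ K := by
      intro τ hτ
      rw [Real.norm_eq_abs]
      have h1 : |(-η) * s τ| = η * |s τ| := by
        rw [abs_mul, abs_neg, abs_of_pos hη]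
      have h2 := hsbd τ hτ
      have h3 := hftbd τ hτ
      calc |(-η) * s τ + ft τ| ≤ |(-η) * s τ| + |ft τ| := abs_add_le _ _
        _ = η * |s τ| + |ft τ| := by rw [h1]
        _ ≤ η * Cs + Mf := by
            have := mul_le_mul_of_nonneg_left h2 hη.le
            linarith
        _ ≤ K := by simp only [hKdef]; linarith
    have h := Convex.norm_image_sub_le_of_norm_hasDerivWithin_le
      (f := s) (f' := fun τ => -η * s τ + ft τ) (s := Set.Ici (0:ℝ))
      (fun τ hτ => by
        have := (hs τ hτ).hasDerivWithinAt (s := Set.Ici (0:ℝ))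
        simpa [hftdef] using this)
      hbound (convex_Ici 0) hv hu
    simpa [Real.norm_eq_abs] using h
  have htend : Tendsto s atTop (nhds 0) := by
    refine tendsto_zero_of_lipschitz_sq_integrable s K hKpos hlip ?_
    exact (lt_of_le_of_lt hsL2' ENNReal.ofReal_lt_top).ne
  exact ⟨⟨Cx, hCx⟩, hainf, ⟨hftL2, hftinf⟩, ⟨hsL2, hsinf⟩, htend, hxd htend⟩

end
end

section
/- Consider the linearly parameterized error dynamics ṡ = −η s + Y(t)(â − a) with η > 0, together with the higher-order bounded-gain-forgetting composite law v̂̇ = −P(t) Y(t)ᵀ(s + Y(t)(â − a)), â̇ = β 𝒩(t) P(t)(v̂ − â), where 𝒩(t) = 1 + μ‖Y(t)‖² with μ > (3η + 2)/(2ηβ), β > 0, and P(t) is a symmetric positive definite matrix-valued signal satisfying (d/dt) P(t)⁻¹ = −λ(t) P(t)⁻¹ + Y(t)ᵀY(t) with forgetting factor λ(t) = λ₀(1 − ‖P(t)‖/P₀) ≥ 0, λ₀ > 0, P₀ > 0, which keeps ‖P(t)‖ ≤ P₀. Then all trajectories (x, v̂, â) remain bounded, f̃ = Y(â − a) ∈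 L² ∩ L∞, s ∈ L² ∩ L∞, s(t) → 0 as t → ∞, and x(t) → x_d(t). -/
set_option maxHeartbeats 1600000


open MeasureTheory Filter
open scoped RealInnerProductSpace ENNReal

noncomputable section

/-- Cauchy-Schwarz for a symmetric positive semidefinite operator. -/
lemma cs_psd {E : Type*} [NormedAddCommGroup E] [InnerProductSpace ℝ E]
    (T : E →L[ℝ] E) (hsym : ∀ v w : E, ⟪T v, w⟫ = ⟪v, T w⟫) (hpos : ∀ v : E, 0 ≤ ⟪v, T v⟫)
    (u w : E) : ⟪u, T w⟫ ^ 2 ≤ ⟪u, T u⟫ * ⟪w, T w⟫ := by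
  have key : ∀ θ : ℝ, 0 ≤ ⟪u, T u⟫ + 2 * θ * ⟪u, T w⟫ + θ ^ 2 * ⟪w, T w⟫ := by
    intro θ
    have h := hpos (u + θ • w)
    have hc : ⟪w, T u⟫ = ⟪u, T w⟫ := by
      rw [← hsym w u, real_inner_comm]
    simp only [ContinuousLinearMap.map_add, ContinuousLinearMap.map_smul, inner_add_left,
      inner_add_right, real_inner_smul_left, real_inner_smul_right] at h
    rw [hc] at h
    nlinarith [h]
  rcases eq_or_lt_of_le (hpos w) with hC | hC
  · have hB : ⟪u, T w⟫ = 0 := by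
      by_contra hB0
      have h2 : 2 * (-(⟪u, T u⟫ + 1) / (2 * ⟪u, T w⟫)) * ⟪u, T w⟫ = -(⟪u, T u⟫ + 1) := by
        field_simp
      have h3 := key (-(⟪u, T u⟫ + 1) / (2 * ⟪u, T w⟫))
      rw [← hC] at h3
      rw [mul_zero, add_zero, h2] at h3
      linarith
    rw [hB, ← hC, mul_zero]
    simp
  · have hC' : (0:ℝ) < ⟪w, T w⟫ := hC
    have h3 := key (-(⟪u, T w⟫ / ⟪w, T w⟫))
    have h4 : ⟪w, T w⟫ * (⟪u, T u⟫ + 2 * (-(⟪u, T w⟫ / ⟪w, T w⟫)) * ⟪u, T w⟫ +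
        (-(⟪u, T w⟫ / ⟪w, T w⟫)) ^ 2 * ⟪w, T w⟫) = ⟪w, T w⟫ * ⟪u, T u⟫ - ⟪u, T w⟫ ^ 2 := by
      field_simp
      ring
    nlinarith [mul_nonneg hC'.le h3]

/-- lintegral over `Ici 0` bounded by uniform bounds over `Icc 0 n`. -/
lemma lintegral_Ici_le_of_forall_Icc {f : ℝ → ℝ≥0∞}
    (hf : ∀ n : ℕ, AEMeasurable f (volume.restrict (Set.Icc (0:ℝ) n))) {M : ℝ≥0∞}
    (h : ∀ n : ℕ, ∫⁻ t in Set.Icc (0:ℝ) n, f t ≤ M) :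
    ∫⁻ t in Set.Ici (0:ℝ), f t ≤ M := by
  have hind : (Set.Ici (0:ℝ)).indicator f = fun t => ⨆ n : ℕ, (Set.Icc (0:ℝ) n).indicator f t := by
    funext t
    simp only [Set.indicator_apply, Set.mem_Ici, Set.mem_Icc]
    by_cases ht : (0:ℝ) ≤ t
    · rw [if_pos ht]
      obtain ⟨n, hn⟩ := exists_nat_ge t
      apply le_antisymm
      · exact le_iSup_of_le n (le_of_eq (if_pos ⟨ht, hn⟩).symm)
      · refine iSup_le fun m => ?_
        split_ifs
        · exact le_rfl
        · exact zero_le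
    · rw [if_neg ht]
      symm
      simp only [ENNReal.iSup_eq_zero]
      intro m
      exact if_neg fun hm => ht hm.1
  have hmono : ∀ᵐ t : ℝ, Monotone fun n : ℕ => (Set.Icc (0:ℝ) n).indicator f t :=
    Filter.Eventually.of_forall fun t m k hmk =>
      (Set.indicator_le_indicator_of_subset
        (Set.Icc_subset_Icc le_rfl (by exact_mod_cast hmk)) (fun _ => zero_le)) t
  rw [← lintegral_indicator measurableSet_Ici, hind]
  rw [lintegral_iSup'
    (fun m => (aemeasurable_indicator_iff measurableSet_Icc).2 (hf m)) hmono]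
  exact iSup_le fun m => by
    rw [lintegral_indicator measurableSet_Icc]; exact h m

/-- Barbalat-type lemma: a Lipschitz (on `[0,∞)`) square-integrable signal tends to zero. -/
lemma barbalat_sq {f : ℝ → ℝ} {L : ℝ} (hL : 0 < L)
    (hlip : ∀ t u : ℝ, 0 ≤ t → 0 ≤ u → |f t - f u| ≤ L * |t - u|)
    (hint : ∫⁻ t in Set.Ici (0:ℝ), ENNReal.ofReal ((f t) ^ 2) ≠ ⊤) :
    Tendsto f atTop (nhds 0) := by
  rw [Metric.tendsto_atTop]
  by_contra hcon
  push_neg at hcon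
  obtain ⟨ε, hε, hfreq⟩ := hcon
  have hex : ∀ T : ℝ, ∃ t : ℝ, T ≤ t ∧ 0 ≤ t ∧ ε ≤ |f t| := by
    intro T
    obtain ⟨t, ht1, ht2⟩ := hfreq (max T 0)
    refine ⟨t, le_trans (le_max_left _ _) ht1, le_trans (le_max_right _ _) ht1, ?_⟩
    rw [Real.dist_eq, sub_zero] at ht2
    linarith
  set δ : ℝ := ε / (2 * L) with hδdef
  have hδ : 0 < δ := div_pos hε (by linarith)
  let φ : ℕ → ℝ := fun n => Nat.rec (hex 0).choose (fun _ prev => (hex (prev + δ)).choose) n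
  have hφ0 : ∀ n, 0 ≤ φ n := by
    intro n
    cases n with
    | zero => exact (hex 0).choose_spec.2.1
    | succ k => exact (hex (φ k + δ)).choose_spec.2.1
  have hφε : ∀ n, ε ≤ |f (φ n)| := by
    intro n
    cases n with
    | zero => exact (hex 0).choose_spec.2.2
    | succ k => exact (hex (φ k + δ)).choose_spec.2.2
  have hφstep : ∀ n, φ n + δ ≤ φ (n + 1) := fun n => (hex (φ n + δ)).choose_spec.1
  have hφmono : ∀ m n : ℕ, m < n → φ m + δ ≤ φ n := by
    intro m n hmn
    induction n with
    | zero => omega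
    | succ k ih =>
      rcases Nat.lt_succ_iff_lt_or_eq.1 hmn with h | h
      · have := ih h
        have := hφstep k
        linarith [hδ.le]
      · subst h; exact hφstep m
  have hbig : ∀ n, ∀ u ∈ Set.Ioc (φ n) (φ n + δ), ε / 2 ≤ |f u| := by
    intro n u hu
    have hu0 : 0 ≤ u := le_trans (hφ0 n) hu.1.le
    have h1 := hlip u (φ n) hu0 (hφ0 n)
    have h2 : |u - φ n| ≤ δ := by
      rw [abs_of_nonneg (by linarith [hu.1.le])]
      linarith [hu.2]
    have h3 : L * |u - φ n| ≤ L * δ := mul_le_mul_of_nonneg_left h2 hL.le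
    have h4 : L * δ = ε / 2 := by
      rw [hδdef]; field_simp
    have h5 := hφε n
    have := abs_sub_abs_le_abs_sub (f (φ n)) (f u)
    rw [abs_sub_comm (f (φ n)) (f u)] at this
    linarith
  have hcontrib : ∀ n, ENNReal.ofReal (ε ^ 2 / 4) * ENNReal.ofReal δ ≤
      ∫⁻ t in Set.Ioc (φ n) (φ n + δ), ENNReal.ofReal ((f t) ^ 2) := by
    intro n
    have hle : ∫⁻ _ in Set.Ioc (φ n) (φ n + δ), ENNReal.ofReal (ε ^ 2 / 4) ≤
        ∫⁻ t in Set.Ioc (φ n) (φ n + δ), ENNReal.ofReal ((f t) ^ 2) := by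
      refine lintegral_mono_ae ?_
      refine ae_restrict_of_forall_mem measurableSet_Ioc ?_
      intro u hu
      apply ENNReal.ofReal_le_ofReal
      have := hbig n u hu
      nlinarith [abs_nonneg (f u), sq_abs (f u)]
    calc ENNReal.ofReal (ε ^ 2 / 4) * ENNReal.ofReal δ
        = ∫⁻ _ in Set.Ioc (φ n) (φ n + δ), ENNReal.ofReal (ε ^ 2 / 4) := by
          rw [setLIntegral_const, Real.volume_Ioc]
          congr 1
          rw [add_sub_cancel_left]
      _ ≤ _ := hle
  have hdisj : Pairwise (Function.onFun Disjoint fun n => Set.Ioc (φ n) (φ n + δ)) := by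
    intro m n hmn
    rcases hmn.lt_or_gt with h | h
    · exact Set.Ioc_disjoint_Ioc.2 (by
        rw [min_le_iff, le_max_iff]
        left; right; linarith [hφmono m n h])
    · exact (Set.Ioc_disjoint_Ioc.2 (by
        rw [min_le_iff, le_max_iff]
        left; right; linarith [hφmono n m h])).symm
  have hsub : (⋃ n, Set.Ioc (φ n) (φ n + δ)) ⊆ Set.Ici (0:ℝ) := by
    rintro u hu
    obtain ⟨n, hn⟩ := Set.mem_iUnion.1 hu
    exact le_trans (hφ0 n) hn.1.le
  have htop : (⊤ : ℝ≥0∞) ≤ ∫⁻ t in Set.Ici (0:ℝ), ENNReal.ofReal ((f t) ^ 2) := by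
    calc (⊤ : ℝ≥0∞) = ∑' _ : ℕ, ENNReal.ofReal (ε ^ 2 / 4) * ENNReal.ofReal δ := by
          rw [ENNReal.tsum_const_eq_top_of_ne_zero]
          refine (ENNReal.mul_pos ?_ ?_).ne'
          · simpa [ENNReal.ofReal_eq_zero, not_le] using (by positivity : (0:ℝ) < ε ^ 2 / 4)
          · simpa [ENNReal.ofReal_eq_zero, not_le] using hδ
      _ ≤ ∑' n : ℕ, ∫⁻ t in Set.Ioc (φ n) (φ n + δ), ENNReal.ofReal ((f t) ^ 2) :=
          ENNReal.tsum_le_tsum hcontrib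
      _ = ∫⁻ t in ⋃ n, Set.Ioc (φ n) (φ n + δ), ENNReal.ofReal ((f t) ^ 2) :=
          (lintegral_iUnion (fun n => measurableSet_Ioc) hdisj _).symm
      _ ≤ _ := lintegral_mono_set hsub
  exact hint (top_le_iff.1 htop)

/-- The scalar inequality at the heart of the Lyapunov argument. -/
lemma scalar_lyap {η β μ : ℝ} (hη : 0 < η) (hβ : 0 < β) (hμ : (3 * η + 2) / (2 * η * β) < μ) :
    ∃ c : ℝ, 0 < c ∧ ∀ σ G H Y2 E2 q1 q2 lam : ℝ,
      0 ≤ Y2 → 0 ≤ E2 → H ^ 2 ≤ Y2 * E2 → 0 ≤ q1 → 0 ≤ q2 → 0 ≤ lam →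
      σ * (-η * σ + (G - H)) + (-lam * q1 + G ^ 2 - 2 * (σ + (G - H)) * G) / 2 +
        (-lam * q2 + H ^ 2 - 2 * (σ + (G - H)) * H - 2 * (β * (1 + μ * Y2)) * E2) / 2
      ≤ -(c * (σ ^ 2 + G ^ 2 + H ^ 2)) := by
  set κ := β * μ with hκdef
  have hκ : η * κ > 3 * η / 2 + 1 := by
    have h2 : (3 * η + 2) / (2 * η * β) * (2 * η * β) < μ * (2 * η * β) := by
      apply mul_lt_mul_of_pos_right hμ (by positivity)
    rw [div_mul_cancel₀ _ (by positivity)] at h2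
    nlinarith
  have hκ32 : κ - 3 / 2 > 0 := by nlinarith
  set d := η * κ - 3 * η / 2 - 1 with hd_def
  have hd : 0 < d := by simp only [hd_def]; linarith
  have hden : 0 < η + κ - 3 / 2 := by linarith
  set c := min (η / 2) (min (1 / 4) (d / (η + κ - 3 / 2))) with hc_def
  have hc : 0 < c := by
    apply lt_min (by positivity) (lt_min (by norm_num) (by positivity))
  have hc1 : c ≤ η / 2 := min_le_left _ _
  have hc2 : c ≤ 1 / 4 := le_trans (min_le_right _ _) (min_le_left _ _)
  have hc3 : c * (η + κ - 3 / 2) ≤ d := by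
    have hle : c ≤ d / (η + κ - 3 / 2) :=
      le_trans (min_le_right (η / 2) _) (min_le_right (1/4) (d / (η + κ - 3 / 2)))
    calc c * (η + κ - 3 / 2) ≤ d / (η + κ - 3 / 2) * (η + κ - 3 / 2) :=
          mul_le_mul_of_nonneg_right hle hden.le
      _ = d := div_mul_cancel₀ _ hden.ne'
  refine ⟨c, hc, fun σ G H Y2 E2 q1 q2 lam hY2 hE2 hCS hq1 hq2 hlam => ?_⟩
  have hA : 0 < η - c := by linarith
  have hAm : 1 ≤ (η - c) * (κ - 3 / 2 - c) := by nlinarith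
  have key : 0 ≤ (η - c) * σ ^ 2 + 2 * σ * H + (κ - 3 / 2 - c) * H ^ 2 := by
    nlinarith [sq_nonneg ((η - c) * σ + H), mul_pos hA hA, sq_nonneg H]
  have hμ0 : 0 < μ := lt_trans (by positivity) hμ
  have hG : 0 ≤ (1 / 2 - c) * G ^ 2 := by nlinarith [sq_nonneg G]
  nlinarith [key, hG, mul_nonneg hβ.le hE2, mul_nonneg hlam hq1, mul_nonneg hlam hq2,
    mul_nonneg (mul_nonneg hβ.le hμ0.le) hE2,
    mul_le_mul_of_nonneg_left hCS (le_of_lt (by positivity : (0:ℝ) < β * μ))]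

/-- higher-order composite adaptation with bounded-gain-forgetting
learning rate. -/
theorem bgf_higher_order_composite_adaptation_linear
    {n p : ℕ}
    (x xd : ℝ → EuclideanSpace ℝ (Fin n))
    (s : ℝ → ℝ)
    (Y : ℝ → EuclideanSpace ℝ (Fin p))
    (a : EuclideanSpace ℝ (Fin p))
    (ahat vhat : ℝ → EuclideanSpace ℝ (Fin p))
    (P Q : ℝ → (EuclideanSpace ℝ (Fin p) →L[ℝ] EuclideanSpace ℝ (Fin p)))
    (η β μ lam₀ P₀ : ℝ)
    (hη : 0 < η) (hβ : 0 < β) (hlam₀ : 0 < lam₀) (hP₀ : 0 < P₀)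
    (hμ : (3 * η + 2) / (2 * η * β) < μ)
    -- P(t) is symmetric positive definite
    (hPsym : ∀ t, 0 ≤ t → ∀ v w : EuclideanSpace ℝ (Fin p), ⟪P t v, w⟫ = ⟪v, P t w⟫)
    (hPpos : ∀ t, 0 ≤ t → ∀ v : EuclideanSpace ℝ (Fin p), v ≠ 0 → 0 < ⟪v, P t v⟫)
    -- Q(t) = P(t)⁻¹
    (hPQ : ∀ t, 0 ≤ t →
      (P t).comp (Q t) = ContinuousLinearMap.id ℝ (EuclideanSpace ℝ (Fin p)) ∧
      (Q t).comp (P t) = ContinuousLinearMap.id ℝ (EuclideanSpace ℝ (Fin p)))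
    -- the forgetting factor keeps ‖P(t)‖ ≤ P₀ (so that λ(t) ≥ 0)
    (hPbd : ∀ t, 0 ≤ t → ‖P t‖ ≤ P₀)
    -- bounded-gain-forgetting dynamics (d/dt) P⁻¹ = -λ(t) P⁻¹ + YᵀY,
    -- λ(t) = λ₀ (1 - ‖P(t)‖/P₀)
    (hQdyn : ∀ t, 0 ≤ t →
      HasDerivAt Q ((-(lam₀ * (1 - ‖P t‖ / P₀))) • Q t + rankOne (Y t)) t)
    -- error dynamics ṡ = -η s + Y (â - a)
    (hs : ∀ t, 0 ≤ t → HasDerivAt s (-η * s t + ⟪Y t, ahat t - a⟫) t)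
    -- higher-order composite law v̂̇ = -P(t) Yᵀ(s + Y(â - a)), â̇ = β 𝒩(t) P(t)(v̂ - â),
    -- 𝒩(t) = 1 + μ‖Y(t)‖²
    (hv : ∀ t, 0 ≤ t →
      HasDerivAt vhat (-(P t ((s t + ⟪Y t, ahat t - a⟫) • Y t))) t)
    (ha : ∀ t, 0 ≤ t →
      HasDerivAt ahat ((β * (1 + μ * ‖Y t‖ ^ 2)) • P t (vhat t - ahat t)) t)
    -- the regressor Y(x, t) is locally bounded in x uniformly in t
    (hYloc : ∀ R : ℝ, ∃ M : ℝ, ∀ t, 0 ≤ t → ‖x t‖ ≤ R → ‖Y t‖ ≤ M)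
    -- boundedness of s implies boundedness of x
    (hsx : InLinf s → InLinf x)
    -- s → 0 implies x → x_d
    (hxd : Tendsto s atTop (nhds 0) →
      Tendsto (fun t => x t - xd t) atTop (nhds 0)) :
    InLinf x ∧ InLinf vhat ∧ InLinf ahat ∧
    (InL2 (fun t => ⟪Y t, ahat t - a⟫) ∧ InLinf (fun t => ⟪Y t, ahat t - a⟫)) ∧
    (InL2 s ∧ InLinf s) ∧
    Tendsto s atTop (nhds 0) ∧
    Tendsto (fun t => x t - xd t) atTop (nhds 0) := by
  -- ## Basic algebraic facts about P and Q
  have hQP : ∀ t, 0 ≤ t → ∀ z, Q t (P t z) = z := by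
    intro t ht z
    have h := (hPQ t ht).2
    calc Q t (P t z) = ((Q t).comp (P t)) z := rfl
      _ = z := by rw [h]; rfl
  have hPQ' : ∀ t, 0 ≤ t → ∀ z, P t (Q t z) = z := by
    intro t ht z
    have h := (hPQ t ht).1
    calc P t (Q t z) = ((P t).comp (Q t)) z := rfl
      _ = z := by rw [h]; rfl
  have hPnn : ∀ t, 0 ≤ t → ∀ v, 0 ≤ ⟪v, P t v⟫ := by
    intro t ht v
    rcases eq_or_ne v 0 with rfl | hv
    · simp
    · exact (hPpos t ht v hv).le
  have hQnn : ∀ t, 0 ≤ t → ∀ v, 0 ≤ ⟪v, Q t v⟫ := by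
    intro t ht v
    have h := hPnn t ht (Q t v)
    rw [hPQ' t ht v] at h
    rwa [real_inner_comm] at h
  have hcoer : ∀ t, 0 ≤ t → ∀ v, ‖v‖ ^ 2 ≤ P₀ * ⟪v, Q t v⟫ := by
    intro t ht v
    have hpv : P t (Q t v) = v := hPQ' t ht v
    have h1 : ⟪P t (Q t v), v⟫ = ⟪v, v⟫ := by rw [hpv]
    rw [hPsym t ht] at h1
    have hcs := cs_psd (P t) (hPsym t ht) (hPnn t ht) (Q t v) v
    rw [hpv] at hcs
    have h2 : ⟪Q t v, v⟫ = ⟪v, Q t v⟫ := real_inner_comm _ _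
    have hq := hQnn t ht v
    have h3 : ⟪v, P t v⟫ ≤ ‖v‖ * (P₀ * ‖v‖) := by
      have hop : ‖P t v‖ ≤ P₀ * ‖v‖ := by
        calc ‖P t v‖ ≤ ‖P t‖ * ‖v‖ := (P t).le_opNorm v
          _ ≤ P₀ * ‖v‖ := mul_le_mul_of_nonneg_right (hPbd t ht) (norm_nonneg v)
      calc ⟪v, P t v⟫ ≤ ‖v‖ * ‖P t v‖ := real_inner_le_norm _ _
        _ ≤ ‖v‖ * (P₀ * ‖v‖) := mul_le_mul_of_nonneg_left hop (norm_nonneg v)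
    have h4 : ⟪v, v⟫ = ‖v‖ ^ 2 := real_inner_self_eq_norm_sq v
    rcases eq_or_lt_of_le (norm_nonneg v) with hz | hz
    · have hz2 : ‖v‖ ^ 2 = 0 := by rw [← hz]; ring
      rw [hz2]
      exact mul_nonneg hP₀.le hq
    · rw [h1, h2, h4] at hcs
      have h6 : ⟪v, Q t v⟫ * ⟪v, P t v⟫ ≤ ⟪v, Q t v⟫ * (‖v‖ * (P₀ * ‖v‖)) :=
        mul_le_mul_of_nonneg_left h3 hq
      have h7 : ‖v‖ ^ 2 * ‖v‖ ^ 2 ≤ (P₀ * ⟪v, Q t v⟫) * ‖v‖ ^ 2 := by nlinarith [hcs, h6]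
      exact le_of_mul_le_mul_right h7 (by positivity)
  have hlamnn : ∀ t : ℝ, 0 ≤ t → 0 ≤ lam₀ * (1 - ‖P t‖ / P₀) := by
    intro t ht
    apply mul_nonneg hlam₀.le
    rw [sub_nonneg, div_le_one hP₀]
    exact hPbd t ht
  obtain ⟨c, hc, hscalar⟩ := scalar_lyap hη hβ hμ
  -- ## The Lyapunov function and its derivative
  set W1 : ℝ → EuclideanSpace ℝ (Fin p) := fun τ => vhat τ - a with hW1
  set W2 : ℝ → EuclideanSpace ℝ (Fin p) := fun τ => vhat τ - ahat τ with hW2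
  set Gf : ℝ → ℝ := fun τ => ⟪Y τ, W1 τ⟫ with hGf
  set Hf : ℝ → ℝ := fun τ => ⟪Y τ, W2 τ⟫ with hHf
  set V : ℝ → ℝ := fun τ =>
    (s τ * s τ + ⟪W1 τ, Q τ (W1 τ)⟫ + ⟪W2 τ, Q τ (W2 τ)⟫) / 2 with hV
  set D : ℝ → ℝ := fun τ =>
    ((-η * s τ + ⟪Y τ, ahat τ - a⟫) * s τ + s τ * (-η * s τ + ⟪Y τ, ahat τ - a⟫) +
      (-(lam₀ * (1 - ‖P τ‖ / P₀)) * ⟪W1 τ, Q τ (W1 τ)⟫ + Gf τ ^ 2 -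
        2 * (s τ + ⟪Y τ, ahat τ - a⟫) * Gf τ) +
      (-(lam₀ * (1 - ‖P τ‖ / P₀)) * ⟪W2 τ, Q τ (W2 τ)⟫ + Hf τ ^ 2 -
        2 * (s τ + ⟪Y τ, ahat τ - a⟫) * Hf τ -
        2 * (β * (1 + μ * ‖Y τ‖ ^ 2)) * ‖W2 τ‖ ^ 2)) / 2 with hD
  have hVD : ∀ t, 0 ≤ t → HasDerivAt V (D t) t := by
    intro t ht
    have hsd := hs t ht
    have hvd := hv t ht
    have had := ha t ht
    have hQd := hQdyn t ht
    have hW1d : HasDerivAt W1 (-(P t ((s t + ⟪Y t, ahat t - a⟫) • Y t))) t := hvd.sub_const a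
    have hW2d : HasDerivAt W2 (-(P t ((s t + ⟪Y t, ahat t - a⟫) • Y t)) -
        (β * (1 + μ * ‖Y t‖ ^ 2)) • P t (W2 t)) t := hvd.sub had
    have e1 : ∀ r : ℝ, Q t (-(P t (r • Y t))) = -(r • Y t) := by
      intro r
      rw [map_neg, hQP t ht]
    have e2 : ∀ (r : ℝ) (u : EuclideanSpace ℝ (Fin p)),
        (⟪-(P t (r • Y t)), Q t u⟫ : ℝ) = -(r * ⟪Y t, u⟫) := by
      intro r u
      rw [inner_neg_left, hPsym t ht, hPQ' t ht, real_inner_smul_left]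
    have hq1d : HasDerivAt (fun τ => (⟪W1 τ, Q τ (W1 τ)⟫ : ℝ))
        (-(lam₀ * (1 - ‖P t‖ / P₀)) * ⟪W1 t, Q t (W1 t)⟫ + Gf t ^ 2 -
          2 * (s t + ⟪Y t, ahat t - a⟫) * Gf t) t := by
      have raw := (hW1d.inner ℝ (hQd.clm_apply hW1d))
      refine raw.congr_deriv ?_
      rw [e1]
      simp only [ContinuousLinearMap.add_apply, ContinuousLinearMap.coe_smul', Pi.smul_apply,
        rankOne, ContinuousLinearMap.smulRight_apply, innerSL_apply_apply, inner_add_right,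
        inner_neg_right, real_inner_smul_right, smul_eq_mul, e2, hGf]
      simp only [real_inner_comm (W1 t) (Y t)]
      ring
    have hq2d : HasDerivAt (fun τ => (⟪W2 τ, Q τ (W2 τ)⟫ : ℝ))
        (-(lam₀ * (1 - ‖P t‖ / P₀)) * ⟪W2 t, Q t (W2 t)⟫ + Hf t ^ 2 -
          2 * (s t + ⟪Y t, ahat t - a⟫) * Hf t -
          2 * (β * (1 + μ * ‖Y t‖ ^ 2)) * ‖W2 t‖ ^ 2) t := by
      have raw := (hW2d.inner ℝ (hQd.clm_apply hW2d))
      refine raw.congr_deriv ?_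
      have e3 : Q t (-(P t ((s t + ⟪Y t, ahat t - a⟫) • Y t)) -
          (β * (1 + μ * ‖Y t‖ ^ 2)) • P t (W2 t)) =
          -((s t + ⟪Y t, ahat t - a⟫) • Y t) - (β * (1 + μ * ‖Y t‖ ^ 2)) • (W2 t) := by
        rw [map_sub, e1, ContinuousLinearMap.map_smul, hQP t ht]
      clear raw
      have e4 : (⟪(β * (1 + μ * ‖Y t‖ ^ 2)) • P t (W2 t), Q t (W2 t)⟫ : ℝ) =
          (β * (1 + μ * ‖Y t‖ ^ 2)) * ‖W2 t‖ ^ 2 := by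
        rw [real_inner_smul_left, hPsym t ht, hPQ' t ht, real_inner_self_eq_norm_sq]
      have e5 : (⟪W2 t, W2 t⟫ : ℝ) = ‖W2 t‖ ^ 2 := real_inner_self_eq_norm_sq _
      rw [e3]
      simp only [ContinuousLinearMap.add_apply, ContinuousLinearMap.coe_smul', Pi.smul_apply,
        rankOne, ContinuousLinearMap.smulRight_apply, innerSL_apply_apply, inner_add_right,
        inner_sub_right, inner_sub_left, inner_neg_right, real_inner_smul_right, smul_eq_mul,
        e2, e4, e5, hHf]
      simp only [real_inner_comm (W2 t) (Y t)]
      ring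
    exact (((hsd.mul hsd).add hq1d).add hq2d).div_const 2
  -- ## The key differential inequality
  have hFGH : ∀ t : ℝ, (⟪Y t, ahat t - a⟫ : ℝ) = Gf t - Hf t := by
    intro t
    simp only [hGf, hHf, hW1, hW2]
    rw [← inner_sub_right]
    congr 1
    abel
  have hDle : ∀ t, 0 ≤ t → D t ≤ -(c * (s t ^ 2 + Gf t ^ 2 + Hf t ^ 2)) := by
    intro t ht
    have hCS : Hf t ^ 2 ≤ ‖Y t‖ ^ 2 * ‖W2 t‖ ^ 2 := by
      have habs := abs_real_inner_le_norm (Y t) (W2 t)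
      simp only [hHf]
      nlinarith [abs_nonneg (⟪Y t, W2 t⟫ : ℝ), sq_abs (⟪Y t, W2 t⟫ : ℝ), norm_nonneg (Y t),
        norm_nonneg (W2 t)]
    have hineq := hscalar (s t) (Gf t) (Hf t) (‖Y t‖ ^ 2) (‖W2 t‖ ^ 2)
      (⟪W1 t, Q t (W1 t)⟫) (⟪W2 t, Q t (W2 t)⟫) (lam₀ * (1 - ‖P t‖ / P₀))
      (sq_nonneg _) (sq_nonneg _) hCS (hQnn t ht (W1 t)) (hQnn t ht (W2 t)) (hlamnn t ht)
    have heq : D t = s t * (-η * s t + (Gf t - Hf t)) +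
        (-(lam₀ * (1 - ‖P t‖ / P₀)) * ⟪W1 t, Q t (W1 t)⟫ + Gf t ^ 2 -
          2 * (s t + (Gf t - Hf t)) * Gf t) / 2 +
        (-(lam₀ * (1 - ‖P t‖ / P₀)) * ⟪W2 t, Q t (W2 t)⟫ + Hf t ^ 2 -
          2 * (s t + (Gf t - Hf t)) * Hf t -
          2 * (β * (1 + μ * ‖Y t‖ ^ 2)) * ‖W2 t‖ ^ 2) / 2 := by
      simp only [hD, hFGH t]
      ring
    rw [heq]
    exact hineq
  -- ## V is non-increasing, hence everything is bounded
  have hVanti : AntitoneOn V (Set.Ici (0:ℝ)) := by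
    apply antitoneOn_of_deriv_nonpos (convex_Ici 0)
    · exact fun τ hτ => ((hVD τ hτ).continuousAt).continuousWithinAt
    · intro τ hτ
      rw [interior_Ici] at hτ
      exact ((hVD τ (le_of_lt hτ)).differentiableAt).differentiableWithinAt
    · intro τ hτ
      rw [interior_Ici] at hτ
      rw [(hVD τ (le_of_lt hτ)).deriv]
      have h := hDle τ (le_of_lt hτ)
      nlinarith [mul_nonneg hc.le (sq_nonneg (s τ)), mul_nonneg hc.le (sq_nonneg (Gf τ)),
        mul_nonneg hc.le (sq_nonneg (Hf τ))]
  have hVle : ∀ t, 0 ≤ t → V t ≤ V 0 := fun t ht =>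
    hVanti Set.self_mem_Ici ht ht
  have hVt : ∀ t : ℝ, V t = (s t * s t + ⟪W1 t, Q t (W1 t)⟫ + ⟪W2 t, Q t (W2 t)⟫) / 2 :=
    fun t => rfl
  have hVnn : ∀ t, 0 ≤ t → 0 ≤ V t := by
    intro t ht
    rw [hVt t]
    have h1 := hQnn t ht (W1 t)
    have h2 := hQnn t ht (W2 t)
    nlinarith [mul_self_nonneg (s t)]
  have hV0 : 0 ≤ V 0 := hVnn 0 le_rfl
  have hs2 : ∀ t, 0 ≤ t → s t ^ 2 ≤ 2 * V 0 := by
    intro t ht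
    have h := hVle t ht
    rw [hVt t] at h
    have h1 := hQnn t ht (W1 t)
    have h2 := hQnn t ht (W2 t)
    nlinarith [pow_two (s t)]
  have hq1le : ∀ t, 0 ≤ t → (⟪W1 t, Q t (W1 t)⟫ : ℝ) ≤ 2 * V 0 := by
    intro t ht
    have h := hVle t ht
    rw [hVt t] at h
    have h2 := hQnn t ht (W2 t)
    nlinarith [mul_self_nonneg (s t)]
  have hq2le : ∀ t, 0 ≤ t → (⟪W2 t, Q t (W2 t)⟫ : ℝ) ≤ 2 * V 0 := by
    intro t ht
    have h := hVle t ht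
    rw [hVt t] at h
    have h1 := hQnn t ht (W1 t)
    nlinarith [mul_self_nonneg (s t)]
  set K : ℝ := Real.sqrt (P₀ * (2 * V 0)) with hKdef
  have hKnn : 0 ≤ K := Real.sqrt_nonneg _
  have hW1K : ∀ t, 0 ≤ t → ‖W1 t‖ ≤ K := by
    intro t ht
    have h1 : ‖W1 t‖ ^ 2 ≤ P₀ * (2 * V 0) := by
      calc ‖W1 t‖ ^ 2 ≤ P₀ * ⟪W1 t, Q t (W1 t)⟫ := hcoer t ht (W1 t)
        _ ≤ P₀ * (2 * V 0) := mul_le_mul_of_nonneg_left (hq1le t ht) hP₀.le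
    have h2 := Real.sqrt_le_sqrt h1
    rwa [Real.sqrt_sq (norm_nonneg _)] at h2
  have hW2K : ∀ t, 0 ≤ t → ‖W2 t‖ ≤ K := by
    intro t ht
    have h1 : ‖W2 t‖ ^ 2 ≤ P₀ * (2 * V 0) := by
      calc ‖W2 t‖ ^ 2 ≤ P₀ * ⟪W2 t, Q t (W2 t)⟫ := hcoer t ht (W2 t)
        _ ≤ P₀ * (2 * V 0) := mul_le_mul_of_nonneg_left (hq2le t ht) hP₀.le
    have h2 := Real.sqrt_le_sqrt h1
    rwa [Real.sqrt_sq (norm_nonneg _)] at h2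
  set Cs : ℝ := Real.sqrt (2 * V 0) with hCsdef
  have hCsnn : 0 ≤ Cs := Real.sqrt_nonneg _
  have hsb : ∀ t, 0 ≤ t → |s t| ≤ Cs := by
    intro t ht
    have h2 := Real.sqrt_le_sqrt (hs2 t ht)
    rwa [Real.sqrt_sq_eq_abs] at h2
  have hsInf : InLinf s := ⟨Cs, fun t ht => by rw [Real.norm_eq_abs]; exact hsb t ht⟩
  have hxInf : InLinf x := hsx hsInf
  obtain ⟨Cx, hCx⟩ := hxInf
  obtain ⟨MY0, hMY0⟩ := hYloc Cx
  set MY : ℝ := max MY0 0 with hMYdef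
  have hMYnn : 0 ≤ MY := le_max_right _ _
  have hMY : ∀ t, 0 ≤ t → ‖Y t‖ ≤ MY :=
    fun t ht => le_trans (hMY0 t ht (hCx t ht)) (le_max_left _ _)
  have hvhatInf : InLinf vhat := by
    refine ⟨K + ‖a‖, fun t ht => ?_⟩
    have hv1 : vhat t = W1 t + a := by simp only [hW1]; abel
    rw [hv1]
    calc ‖W1 t + a‖ ≤ ‖W1 t‖ + ‖a‖ := norm_add_le _ _
      _ ≤ K + ‖a‖ := by linarith [hW1K t ht]
  have hahatInf : InLinf ahat := by
    refine ⟨K + ‖a‖ + K, fun t ht => ?_⟩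
    have hv1 : ahat t = W1 t + a - W2 t := by simp only [hW1, hW2]; abel
    rw [hv1]
    calc ‖W1 t + a - W2 t‖ ≤ ‖W1 t + a‖ + ‖W2 t‖ := norm_sub_le _ _
      _ ≤ ‖W1 t‖ + ‖a‖ + ‖W2 t‖ := by linarith [norm_add_le (W1 t) a]
      _ ≤ K + ‖a‖ + K := by linarith [hW1K t ht, hW2K t ht]
  set CF : ℝ := MY * (2 * K) with hCFdef
  have hCFnn : 0 ≤ CF := mul_nonneg hMYnn (by linarith)
  have hFb : ∀ t, 0 ≤ t → |(⟪Y t, ahat t - a⟫ : ℝ)| ≤ CF := by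
    intro t ht
    have h1 : ahat t - a = W1 t - W2 t := by simp only [hW1, hW2]; abel
    calc |(⟪Y t, ahat t - a⟫ : ℝ)| ≤ ‖Y t‖ * ‖ahat t - a‖ := abs_real_inner_le_norm _ _
      _ ≤ MY * (2 * K) := by
          apply mul_le_mul (hMY t ht) ?_ (norm_nonneg _) hMYnn
          rw [h1]
          calc ‖W1 t - W2 t‖ ≤ ‖W1 t‖ + ‖W2 t‖ := norm_sub_le _ _
            _ ≤ 2 * K := by linarith [hW1K t ht, hW2K t ht]
  have hFInf : InLinf (fun t => (⟪Y t, ahat t - a⟫ : ℝ)) :=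
    ⟨CF, fun t ht => by rw [Real.norm_eq_abs]; exact hFb t ht⟩
  -- ## FTC-based L² bounds
  have hVcont : ∀ T : ℝ, ContinuousOn (fun τ => -V τ) (Set.Icc (0:ℝ) T) :=
    fun T τ hτ => (((hVD τ hτ.1).continuousAt).neg).continuousWithinAt
  have hVderiv : ∀ T : ℝ, ∀ τ ∈ Set.Ioo (0:ℝ) T,
      HasDerivWithinAt (fun τ => -V τ) (-D τ) (Set.Ioi τ) τ :=
    fun T τ hτ => ((hVD τ hτ.1.le).neg).hasDerivWithinAt
  have hFTC : ∀ T : ℝ, 0 ≤ T → ∀ φ : ℝ → ℝ, IntegrableOn φ (Set.Icc 0 T) →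
      (∀ τ ∈ Set.Ioo (0:ℝ) T, φ τ ≤ -D τ) → ∫ τ in Set.Icc (0:ℝ) T, φ τ ≤ V 0 := by
    intro T hT φ hφint hφle
    have h := intervalIntegral.integral_le_sub_of_hasDeriv_right_of_le hT (hVcont T)
      (hVderiv T) hφint hφle
    have h2 : (fun τ => -V τ) T - (fun τ => -V τ) 0 = V 0 - V T := by
      show -V T - -V 0 = V 0 - V T; ring
    rw [h2] at h
    have h3 : ∫ τ in Set.Icc (0:ℝ) T, φ τ = ∫ τ in (0:ℝ)..T, φ τ := by
      rw [intervalIntegral.integral_of_le hT, MeasureTheory.integral_Icc_eq_integral_Ioc]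
    rw [h3]
    linarith [hVnn T hT]
  have hL2gen : ∀ (g : ℝ → ℝ) (cg : ℝ), 0 < cg →
      (∀ m : ℕ, AEMeasurable g (volume.restrict (Set.Icc (0:ℝ) m))) →
      (∃ Cb : ℝ, ∀ τ, 0 ≤ τ → |g τ| ≤ Cb) →
      (∀ τ, 0 ≤ τ → cg * g τ ^ 2 ≤ -D τ) →
      ∫⁻ t in Set.Ici (0:ℝ), ENNReal.ofReal (g t ^ 2) ≤ ENNReal.ofReal (V 0 / cg) := by
    rintro g cg hcg hgm ⟨Cb, hgb⟩ hgD
    apply lintegral_Ici_le_of_forall_Icc (fun m => ((hgm m).pow_const 2).ennreal_ofReal)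
    intro m
    have hm : (0:ℝ) ≤ (m:ℝ) := Nat.cast_nonneg m
    have hgint : IntegrableOn (fun τ => g τ ^ 2) (Set.Icc (0:ℝ) m) := by
      apply Integrable.mono' (integrable_const (Cb ^ 2))
        ((hgm m).pow_const 2).aestronglyMeasurable
      refine ae_restrict_of_forall_mem measurableSet_Icc fun τ hτ => ?_
      rw [Real.norm_eq_abs, abs_pow]
      exact pow_le_pow_left₀ (abs_nonneg _) (hgb τ hτ.1) 2
    have hφint : IntegrableOn (fun τ => cg * g τ ^ 2) (Set.Icc (0:ℝ) m) :=
      hgint.const_mul cg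
    have hftc := hFTC m hm _ hφint (fun τ hτ => hgD τ hτ.1.le)
    have h1 : ∫ τ in Set.Icc (0:ℝ) (m:ℝ), cg * g τ ^ 2 =
        cg * ∫ τ in Set.Icc (0:ℝ) (m:ℝ), g τ ^ 2 := integral_const_mul cg _
    rw [h1, mul_comm] at hftc
    have h2 : ∫ τ in Set.Icc (0:ℝ) (m:ℝ), g τ ^ 2 ≤ V 0 / cg := by
      rw [le_div_iff₀ hcg]; exact hftc
    calc ∫⁻ t in Set.Icc (0:ℝ) m, ENNReal.ofReal (g t ^ 2)
        = ENNReal.ofReal (∫ τ in Set.Icc (0:ℝ) (m:ℝ), g τ ^ 2) :=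
          (ofReal_integral_eq_lintegral_ofReal hgint
            (Filter.Eventually.of_forall fun τ => sq_nonneg (g τ))).symm
      _ ≤ ENNReal.ofReal (V 0 / cg) := ENNReal.ofReal_le_ofReal h2
  have hscont : ∀ T : ℝ, ContinuousOn s (Set.Icc (0:ℝ) T) :=
    fun T τ hτ => ((hs τ hτ.1).continuousAt).continuousWithinAt
  have hsL2 : InL2 s := by
    show ∫⁻ t in Set.Ici (0:ℝ), ENNReal.ofReal (‖s t‖ ^ 2) < ⊤
    have heq : ∀ t : ℝ, ‖s t‖ ^ 2 = s t ^ 2 := fun t => by rw [Real.norm_eq_abs, sq_abs]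
    simp only [heq]
    refine lt_of_le_of_lt (hL2gen s c hc ?_ ⟨Cs, fun τ hτ => hsb τ hτ⟩ ?_) ENNReal.ofReal_lt_top
    · exact fun m => (hscont m).aemeasurable measurableSet_Icc
    · intro τ hτ
      nlinarith [hDle τ hτ, mul_nonneg hc.le (sq_nonneg (Gf τ)),
        mul_nonneg hc.le (sq_nonneg (Hf τ))]
  set dS : ℝ → ℝ := fun τ => deriv s τ + η * s τ with hdSdef
  have hdSeq : ∀ τ : ℝ, 0 ≤ τ → dS τ = ⟪Y τ, ahat τ - a⟫ := by
    intro τ hτ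
    simp only [hdSdef]
    rw [(hs τ hτ).deriv]
    ring
  have hFL2 : InL2 (fun t => (⟪Y t, ahat t - a⟫ : ℝ)) := by
    show ∫⁻ t in Set.Ici (0:ℝ), ENNReal.ofReal (‖(⟪Y t, ahat t - a⟫ : ℝ)‖ ^ 2) < ⊤
    have hle : ∫⁻ t in Set.Ici (0:ℝ), ENNReal.ofReal (‖(⟪Y t, ahat t - a⟫ : ℝ)‖ ^ 2) ≤
        ∫⁻ t in Set.Ici (0:ℝ), ENNReal.ofReal (dS t ^ 2) := by
      refine lintegral_mono_ae (ae_restrict_of_forall_mem measurableSet_Ici fun τ hτ => ?_)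
      apply ENNReal.ofReal_le_ofReal
      rw [hdSeq τ hτ, Real.norm_eq_abs, sq_abs]
    refine lt_of_le_of_lt (le_trans hle
      (hL2gen dS (c/2) (half_pos hc) ?_ ⟨CF, ?_⟩ ?_)) ENNReal.ofReal_lt_top
    · intro m
      simp only [hdSdef]
      exact (measurable_deriv s).aemeasurable.add
        (((hscont m).aemeasurable measurableSet_Icc).const_mul η)
    · intro τ hτ
      rw [hdSeq τ hτ]
      exact hFb τ hτ
    · intro τ hτ
      rw [hdSeq τ hτ, hFGH τ]
      nlinarith [hDle τ hτ, mul_nonneg hc.le (sq_nonneg (Gf τ + Hf τ)),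
        mul_nonneg hc.le (sq_nonneg (s τ))]
  -- ## Convergence of s
  set L : ℝ := η * Cs + CF + 1 with hLdef
  have hLpos : 0 < L := by nlinarith [mul_nonneg hη.le hCsnn, hCFnn]
  have hlip : ∀ t u : ℝ, 0 ≤ t → 0 ≤ u → |s t - s u| ≤ L * |t - u| := by
    intro t u ht hu
    have hb : ∀ τ ∈ Set.Ici (0:ℝ), ‖-η * s τ + (⟪Y τ, ahat τ - a⟫ : ℝ)‖ ≤ L := by
      intro τ hτ
      rw [Real.norm_eq_abs]
      have e1 : |(-η) * s τ| = η * |s τ| := by rw [abs_mul, abs_neg, abs_of_pos hη]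
      have e2 := abs_add_le (-η * s τ) (⟪Y τ, ahat τ - a⟫ : ℝ)
      have e3 := hsb τ hτ
      have e4 := hFb τ hτ
      have e5 : η * |s τ| ≤ η * Cs := mul_le_mul_of_nonneg_left e3 hη.le
      simp only [hLdef]
      linarith
    have h := Convex.norm_image_sub_le_of_norm_hasDerivWithin_le
      (f := s) (f' := fun τ => -η * s τ + ⟪Y τ, ahat τ - a⟫) (s := Set.Ici (0:ℝ))
      (fun τ hτ => (hs τ hτ).hasDerivWithinAt) hb (convex_Ici 0) hu ht
    rw [Real.norm_eq_abs, Real.norm_eq_abs] at h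
    exact h
  have hsT : Tendsto s atTop (nhds 0) := by
    apply barbalat_sq hLpos hlip
    have h := hsL2
    simp only [InL2, Real.norm_eq_abs, sq_abs] at h
    exact h.ne
  exact ⟨⟨Cx, hCx⟩, hvhatInf, hahatInf, ⟨hFL2, hFInf⟩, ⟨hsL2, hsInf⟩, hsT, hxd hsT⟩
end
end
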